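/- arXiv:1205.5162 — 4 statements merged into one kernel-verified Lean document; each statement's English description precedes it below -/
import Mathlib

section
/- In a simple arrangement of n lines, every independent set of lines has size at most 2n/3. -/
/-- A line in the plane, given as the solution set of a nondegenerate linear equation. -/
def IsLine (l : Set (ℝ × ℝ)) : Prop :=
  ∃ a b c : ℝ, (a, b) ≠ (0, 0) ∧ l = {p : ℝ × ℝ | a * p.1 + b * p.2 = c}

/-- The union of all lines of an arrangement. -/
def linesUnion (L : Finset (Set (ℝ × ℝ))) : Set (ℝ × ℝ) :=
  ⋃ l ∈ L, l

/-- A simple arrangement: every member is a line, every two distinct lines intersect,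
and no three distinct lines share a common point. -/
def SimpleArrangement (L : Finset (Set (ℝ × ℝ))) : Prop :=
  (∀ l ∈ L, IsLine l) ∧
  (∀ l₁ ∈ L, ∀ l₂ ∈ L, l₁ ≠ l₂ → (l₁ ∩ l₂).Nonempty) ∧
  (∀ l₁ ∈ L, ∀ l₂ ∈ L, ∀ l₃ ∈ L, l₁ ≠ l₂ → l₁ ≠ l₃ → l₂ ≠ l₃ → l₁ ∩ l₂ ∩ l₃ = ∅)

/-- A cell of the arrangement: a connected component of the complement of the lines. -/
def IsCell (L : Finset (Set (ℝ × ℝ))) (c : Set (ℝ × ℝ)) : Prop :=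
  ∃ p ∈ (linesUnion L)ᶜ, c = connectedComponentIn (linesUnion L)ᶜ p

/-- A line `l` bounds a cell `c` if `l` contains a nondegenerate segment of the frontier of `c`. -/
def Bounds (l c : Set (ℝ × ℝ)) : Prop :=
  ∃ p q : ℝ × ℝ, p ≠ q ∧ segment ℝ p q ⊆ l ∩ frontier c

/-- The set of lines of the arrangement bounding a given cell. -/
def boundingLines (L : Finset (Set (ℝ × ℝ))) (c : Set (ℝ × ℝ)) : Set (Set (ℝ × ℝ)) :=
  {l | l ∈ L ∧ Bounds l c}

/-- The vertices of the arrangement: intersection points of two distinct lines. -/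
def vertices (L : Finset (Set (ℝ × ℝ))) : Set (ℝ × ℝ) :=
  {p | ∃ l₁ ∈ L, ∃ l₂ ∈ L, l₁ ≠ l₂ ∧ p ∈ l₁ ∧ p ∈ l₂}

/-- A coloring of the lines is proper if no cell is monochromatic, i.e. every cell has
two bounding lines of different colors. -/
def ProperColoring {α : Type*} (L : Finset (Set (ℝ × ℝ))) (col : Set (ℝ × ℝ) → α) : Prop :=
  ∀ c, IsCell L c → ∃ l₁ ∈ boundingLines L c, ∃ l₂ ∈ boundingLines L c, col l₁ ≠ col l₂

/-- A set `S` of lines is independent if no cell is bounded exclusively by lines of `S`. -/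
def IndepLines (L S : Finset (Set (ℝ × ℝ))) : Prop :=
  ∀ c, IsCell L c → ¬(boundingLines L c ⊆ ↑S)

/-- The number of connected components of a planar set. -/
noncomputable def numComponents (S : Set (ℝ × ℝ)) : ℕ :=
  {T : Set (ℝ × ℝ) | ∃ p ∈ S, T = connectedComponentIn S p}.ncard


open Set

lemma seg_infinite {p q : ℝ × ℝ} (h : p ≠ q) : (segment ℝ p q).Infinite := by
  have hinj : Function.Injective (fun θ : ℝ => p + θ • (q - p)) := by
    intro s t hst
    simp only [add_right_inj] at hst
    have hqp : q - p ≠ 0 := sub_ne_zero.mpr (Ne.symm h)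
    have h0 : (s - t) • (q - p) = 0 := by rw [sub_smul, hst, sub_self]
    rcases smul_eq_zero.mp h0 with h1 | h1
    · linarith [sub_eq_zero.mp h1]
    · exact absurd h1 hqp
  rw [segment_eq_image']
  exact Set.Infinite.image hinj.injOn (Set.Icc_infinite (by norm_num : (0:ℝ) < 1))

lemma sgn_trans {x y z : ℝ} (h : 0 < y * z) : (0 < x * y ↔ 0 < x * z) := by
  constructor <;> intro hx <;> nlinarith [mul_pos hx h, sq_nonneg y, sq_nonneg z,
    mul_self_nonneg (x*y), mul_self_nonneg (x*z)]

lemma samesign {A t0 u u' : ℝ} (hA : A ≠ 0) (hu : u ≠ t0) (hu' : u' ≠ t0) :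
    0 < (A * (u - t0)) * (A * (u' - t0)) ↔ (t0 < u ↔ t0 < u') := by
  have h1 : u - t0 ≠ 0 := sub_ne_zero.mpr hu
  have h2 : u' - t0 ≠ 0 := sub_ne_zero.mpr hu'
  have key : A * (u - t0) * (A * (u' - t0)) = A^2 * ((u - t0) * (u' - t0)) := by ring
  have hA2 : 0 < A^2 := by positivity
  rw [key]
  have hred : 0 < A^2 * ((u - t0) * (u' - t0)) ↔ 0 < (u - t0) * (u' - t0) := by
    constructor <;> intro hh <;> nlinarith
  rw [hred]
  constructor
  · intro hpos
    constructor
    · intro hlt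
      by_contra hc
      push_neg at hc
      have h3 : u' - t0 < 0 := sub_neg.mpr (lt_of_le_of_ne hc hu')
      nlinarith
    · intro hlt
      by_contra hc
      push_neg at hc
      have h3 : u - t0 < 0 := sub_neg.mpr (lt_of_le_of_ne hc hu)
      nlinarith
  · intro hiff
    rcases lt_or_gt_of_ne hu with h | h
    · have h' : u' < t0 := by
        rcases lt_or_gt_of_ne hu' with h' | h'
        · exact h'
        · exact absurd (hiff.mpr h') (not_lt.mpr h.le)
      nlinarith
    · have h' : t0 < u' := hiff.mp h
      nlinarith

lemma exists_count (F : Finset ℝ) : ∀ j, j ≤ F.card → ∃ t, t ∉ F ∧ (F.filter (fun a => a < t)).card = j := by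
  intro j
  induction j with
  | zero =>
    intro _
    by_cases hF : F.Nonempty
    · refine ⟨F.min' hF - 1, ?_, ?_⟩
      · intro hmem
        linarith [F.min'_le _ hmem]
      · rw [Finset.card_eq_zero, Finset.filter_eq_empty_iff]
        intro a ha
        push_neg
        linarith [F.min'_le _ ha]
    · rw [Finset.not_nonempty_iff_eq_empty] at hF
      exact ⟨0, by simp [hF]⟩
  | succ j ih =>
    intro hj
    obtain ⟨t, htF, htc⟩ := ih (Nat.le_of_succ_le hj)
    set G := F.filter (fun a => t < a) with hG
    have hGne : G.Nonempty := by
      by_contra hc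
      rw [Finset.not_nonempty_iff_eq_empty, Finset.filter_eq_empty_iff] at hc
      have : F ⊆ F.filter (fun a => a < t) := by
        intro a ha
        refine Finset.mem_filter.mpr ⟨ha, ?_⟩
        rcases lt_trichotomy a t with h | h | h
        · exact h
        · exact absurd (h ▸ ha) htF
        · exact absurd h (hc ha)
      have := Finset.card_le_card this
      omega
    set m := G.min' hGne with hm
    have hmG : m ∈ G := G.min'_mem hGne
    have hmF : m ∈ F := (Finset.mem_filter.mp hmG).1
    have htm : t < m := (Finset.mem_filter.mp hmG).2
    set m2 : ℝ := if h : (G.erase m).Nonempty then (G.erase m).min' h else m + 1 with hm2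
    have hmm2 : m < m2 := by
      rw [hm2]
      split_ifs with h
      · have h1 : (G.erase m).min' h ∈ G.erase m := Finset.min'_mem _ h
        have h2 : (G.erase m).min' h ≠ m := Finset.ne_of_mem_erase h1
        have h3 : (G.erase m).min' h ∈ G := Finset.mem_of_mem_erase h1
        exact lt_of_le_of_ne (G.min'_le _ h3) (Ne.symm h2)
      · linarith
    have hG_ge : ∀ a ∈ G, a ≠ m → m2 ≤ a := by
      intro a ha hane
      rw [hm2]
      split_ifs with h
      · exact Finset.min'_le _ _ (Finset.mem_erase.mpr ⟨hane, ha⟩)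
      · exact absurd ⟨a, Finset.mem_erase.mpr ⟨hane, ha⟩⟩ h
    set t' := (m + m2) / 2 with ht'
    have hmt' : m < t' := by rw [ht']; linarith
    have ht'm2 : t' < m2 := by rw [ht']; linarith
    refine ⟨t', ?_, ?_⟩
    · intro hmem
      have h1 : t' ∈ G := Finset.mem_filter.mpr ⟨hmem, by linarith⟩
      have := hG_ge t' h1 (by linarith)
      linarith
    · have hset : F.filter (fun a => a < t') = insert m (F.filter (fun a => a < t)) := by
        ext a
        simp only [Finset.mem_filter, Finset.mem_insert]
        constructor
        · rintro ⟨haF, hat'⟩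
          by_cases ham : a = m
          · exact Or.inl ham
          · right
            refine ⟨haF, ?_⟩
            by_contra hc
            push_neg at hc
            have hat : t < a := lt_of_le_of_ne hc (fun h => htF (h ▸ haF))
            have haG : a ∈ G := Finset.mem_filter.mpr ⟨haF, hat⟩
            linarith [hG_ge a haG ham]
        · rintro (rfl | ⟨haF, hat⟩)
          · exact ⟨hmF, hmt'⟩
          · exact ⟨haF, by linarith⟩
      rw [hset, Finset.card_insert_of_notMem, htc]
      simp only [Finset.mem_filter]
      rintro ⟨-, h⟩
      linarith
open Set

lemma sign_const {s : Set (ℝ × ℝ)} (hs : IsPreconnected s) {g : ℝ × ℝ → ℝ}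
    (hg : Continuous g) (h0 : ∀ x ∈ s, g x ≠ 0) {p q : ℝ × ℝ} (hp : p ∈ s) (hq : q ∈ s) :
    0 < g p * g q := by
  rcases lt_trichotomy (g p) 0 with h1 | h1 | h1
  · rcases lt_trichotomy (g q) 0 with h2 | h2 | h2
    · nlinarith
    · exact absurd h2 (h0 q hq)
    · exfalso
      obtain ⟨x, hxs, hx⟩ := hs.intermediate_value hp hq hg.continuousOn
        (⟨h1.le, h2.le⟩ : (0:ℝ) ∈ Set.Icc (g p) (g q))
      exact h0 x hxs hx
  · exact absurd h1 (h0 p hp)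
  · rcases lt_trichotomy (g q) 0 with h2 | h2 | h2
    · exfalso
      obtain ⟨x, hxs, hx⟩ := hs.intermediate_value hq hp hg.continuousOn
        (⟨h2.le, h1.le⟩ : (0:ℝ) ∈ Set.Icc (g q) (g p))
      exact h0 x hxs hx
    · exact absurd h2 (h0 q hq)
    · nlinarith

lemma open_off_line {U : Set (ℝ × ℝ)} (hU : IsOpen U) {x : ℝ × ℝ} (hx : x ∈ U)
    {a b c : ℝ} (hab : 0 < a^2 + b^2) {s : ℝ} (hs : s ≠ 0)
    (hfx : a * x.1 + b * x.2 - c = 0) :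
    ∃ y ∈ U, (a * y.1 + b * y.2 - c) * s < 0 := by
  obtain ⟨δ, hδ, hball⟩ := Metric.isOpen_iff.mp hU x hx
  set r : ℝ := δ / (|s| * (|a| + |b|) + 1) with hr
  have hrpos : 0 < r := by
    apply div_pos hδ
    positivity
  set ε : ℝ := -s * r with he
  set y : ℝ × ℝ := (x.1 + ε * a, x.2 + ε * b) with hy
  have hfy : a * y.1 + b * y.2 - c = ε * (a^2 + b^2) := by
    simp only [hy]
    ring_nf
    nlinarith [hfx]
  have hpos : (0:ℝ) < |s| * (|a| + |b|) + 1 := by positivity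
  have hrd : r * (|s| * (|a| + |b|) + 1) = δ := div_mul_cancel₀ _ (ne_of_gt hpos)
  have habs : |ε| = |s| * r := by rw [he, abs_mul, abs_neg, abs_of_pos hrpos]
  have hbound : |ε| * (|a| + |b|) < δ := by
    rw [habs]
    nlinarith [hrpos, abs_nonneg s, abs_nonneg a, abs_nonneg b]
  refine ⟨y, hball ?_, ?_⟩
  · rw [Metric.mem_ball]
    have h1 : dist y x = max (dist y.1 x.1) (dist y.2 x.2) := Prod.dist_eq
    have h2 : dist y.1 x.1 = |ε * a| := by simp [hy, Real.dist_eq, abs_mul]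
    have h3 : dist y.2 x.2 = |ε * b| := by simp [hy, Real.dist_eq, abs_mul]
    have hea : |ε * a| < δ := by
      rw [abs_mul]
      nlinarith [abs_nonneg ε, abs_nonneg a, abs_nonneg b]
    have heb : |ε * b| < δ := by
      rw [abs_mul]
      nlinarith [abs_nonneg ε, abs_nonneg a, abs_nonneg b]
    rw [h1]
    exact max_lt (h2 ▸ hea) (h3 ▸ heb)
  · rw [hfy, he]
    have : -s * r * (a^2+b^2) * s = -(s^2 * r * (a^2+b^2)) := by ring
    rw [this, neg_lt_zero]
    have hs2 : 0 < s^2 := by positivity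
    positivity
lemma sumsq_pos {a b : ℝ} (h : (a, b) ≠ ((0:ℝ), (0:ℝ))) : 0 < a^2 + b^2 := by
  have h' : a ≠ 0 ∨ b ≠ 0 := by
    by_contra hc
    push_neg at hc
    exact h (by simp [hc.1, hc.2])
  rcases h' with h' | h'
  · nlinarith [sq_nonneg b, sq_pos_of_ne_zero h']
  · nlinarith [sq_nonneg a, sq_pos_of_ne_zero h']

lemma kernel_repr {a b u v : ℝ} (hD : 0 < a^2 + b^2) (h : a*u + b*v = 0) :
    ∃ t, u = -(t*b) ∧ v = t*a := by
  refine ⟨(a*v - b*u)/(a^2+b^2), ?_, ?_⟩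
  · field_simp
    linear_combination a * h
  · field_simp
    linear_combination b * h

noncomputable def lparam (a b c : ℝ) (t : ℝ) : ℝ × ℝ :=
  (a*c/(a^2+b^2) - t*b, b*c/(a^2+b^2) + t*a)

lemma lparam_on {a b c : ℝ} (h : 0 < a^2+b^2) (t : ℝ) :
    a * (lparam a b c t).1 + b * (lparam a b c t).2 = c := by
  simp only [lparam]
  field_simp
  ring

lemma lparam_comp (a b c a' b' c' : ℝ) :
    ∀ t, a' * (lparam a b c t).1 + b' * (lparam a b c t).2 - c'
      = (a*b' - a'*b)*t + (a' * (lparam a b c 0).1 + b' * (lparam a b c 0).2 - c') := by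
  intro t
  simp only [lparam]
  ring

lemma lparam_surj {a b c : ℝ} (h : 0 < a^2+b^2) {p : ℝ × ℝ} (hp : a*p.1 + b*p.2 = c) :
    ∃ t, lparam a b c t = p := by
  have hker : a*(p.1 - a*c/(a^2+b^2)) + b*(p.2 - b*c/(a^2+b^2)) = 0 := by
    field_simp
    linear_combination (a^2+b^2) * hp
  obtain ⟨t, ht1, ht2⟩ := kernel_repr h hker
  refine ⟨t, ?_⟩
  have : (lparam a b c t).1 = p.1 ∧ (lparam a b c t).2 = p.2 := by
    constructor
    · simp only [lparam]; linarith [ht1]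
    · simp only [lparam]; linarith [ht2]
  exact Prod.ext this.1 this.2

lemma prop_line {a1 b1 c1 a2 b2 c2 : ℝ} (h1 : 0 < a1^2+b1^2) (h2 : 0 < a2^2+b2^2)
    (hcross : a1*b2 - a2*b1 = 0) (z : ℝ×ℝ) (hz1 : a1*z.1+b1*z.2 = c1)
    (hz2 : a2*z.1+b2*z.2 = c2) :
    {p : ℝ×ℝ | a1*p.1+b1*p.2 = c1} = {p : ℝ×ℝ | a2*p.1+b2*p.2 = c2} := by
  set lam := (a1*a2 + b1*b2)/(a1^2+b1^2) with hlam
  have ha2 : a2 = lam * a1 := by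
    rw [hlam]
    field_simp
    linear_combination (-b1) * hcross
  have hb2 : b2 = lam * b1 := by
    rw [hlam]
    field_simp
    linear_combination a1 * hcross
  have hlam0 : lam ≠ 0 := by
    intro h0
    rw [h0, zero_mul] at ha2 hb2
    nlinarith
  have hc2 : c2 = lam * c1 := by
    rw [← hz2, ha2, hb2, ← hz1]
    ring
  ext p
  simp only [Set.mem_setOf_eq, ha2, hb2, hc2]
  constructor
  · intro h; linear_combination lam * h
  · intro h
    have : lam * (a1*p.1 + b1*p.2) = lam * c1 := by linear_combination h
    have := mul_left_cancel₀ hlam0 this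
    linarith

lemma cross_ne_zero {a1 b1 c1 a2 b2 c2 : ℝ} (h1 : 0 < a1^2+b1^2) (h2 : 0 < a2^2+b2^2)
    (hne : {p : ℝ×ℝ | a1*p.1+b1*p.2 = c1} ≠ {p : ℝ×ℝ | a2*p.1+b2*p.2 = c2})
    {z : ℝ×ℝ} (hz1 : a1*z.1+b1*z.2 = c1) (hz2 : a2*z.1+b2*z.2 = c2) :
    a1*b2 - a2*b1 ≠ 0 := by
  intro h0
  exact hne (prop_line h1 h2 h0 z hz1 hz2)

lemma line_inter_subsingleton {l1 l2 : Set (ℝ×ℝ)} (h1 : IsLine l1) (h2 : IsLine l2)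
    (hne : l1 ≠ l2) : (l1 ∩ l2).Subsingleton := by
  obtain ⟨a1, b1, c1, hab1, rfl⟩ := h1
  obtain ⟨a2, b2, c2, hab2, rfl⟩ := h2
  have hD1 := sumsq_pos hab1
  have hD2 := sumsq_pos hab2
  intro p hp q hq
  by_contra hpq
  have hu : a1*(q.1 - p.1) + b1*(q.2 - p.2) = 0 := by
    have := hp.1; have := hq.1
    simp only [Set.mem_setOf_eq] at *
    linarith
  have hv : a2*(q.1 - p.1) + b2*(q.2 - p.2) = 0 := by
    have := hp.2; have := hq.2
    simp only [Set.mem_setOf_eq] at *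
    linarith
  have huv : (q.1 - p.1, q.2 - p.2) ≠ ((0:ℝ), (0:ℝ)) := by
    intro h
    apply hpq
    have h1' := congrArg Prod.fst h
    have h2' := congrArg Prod.snd h
    simp at h1' h2'
    exact Prod.ext (by linarith) (by linarith)
  have hcross : a1*b2 - a2*b1 = 0 := by
    by_contra hc
    have e1 : (q.1-p.1)*(a1*b2 - a2*b1) = 0 := by linear_combination b2 * hu - b1 * hv
    have e2 : (q.2-p.2)*(a1*b2 - a2*b1) = 0 := by linear_combination (-a2) * hu + a1 * hv
    have := mul_eq_zero.mp e1
    have := mul_eq_zero.mp e2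
    apply huv
    rcases mul_eq_zero.mp e1 with h | h
    · rcases mul_eq_zero.mp e2 with h' | h'
      · exact Prod.ext (by simpa using h) (by simpa using h')
      · exact absurd h' hc
    · exact absurd h hc
  exact hne (prop_line hD1 hD2 hcross p hp.1 hp.2)



def mcell (f : Set (ℝ×ℝ) → (ℝ×ℝ) → ℝ) (T : Finset (Set (ℝ×ℝ))) (p : ℝ×ℝ) : Set (ℝ×ℝ) :=
  {q | ∀ m ∈ T, 0 < f m q * f m p}

def mcells (f : Set (ℝ×ℝ) → (ℝ×ℝ) → ℝ) (T : Finset (Set (ℝ×ℝ))) : Set (Set (ℝ×ℝ)) :=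
  {C | ∃ p, (∀ m ∈ T, f m p ≠ 0) ∧ C = mcell f T p}

lemma convex_affine_pos (α β γ : ℝ) : Convex ℝ {q : ℝ×ℝ | 0 < α*q.1 + β*q.2 - γ} := by
  intro x hx y hy σ τ hσ hτ hστ
  simp only [Set.mem_setOf_eq] at *
  have hgoal : α*(σ•x + τ•y).1 + β*(σ•x + τ•y).2 - γ
      = σ*(α*x.1 + β*x.2 - γ) + τ*(α*y.1 + β*y.2 - γ) + (σ + τ - 1)*γ := by
    simp [Prod.smul_def, smul_eq_mul]
    ring
  rw [hgoal, hστ]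
  rcases le_total (α*x.1 + β*x.2 - γ) (α*y.1 + β*y.2 - γ) with h | h
  · nlinarith [mul_nonneg hτ (sub_nonneg.mpr h)]
  · nlinarith [mul_nonneg hσ (sub_nonneg.mpr h)]

lemma mcell_convex {f : Set (ℝ×ℝ) → (ℝ×ℝ) → ℝ} {T : Finset (Set (ℝ×ℝ))}
    (haff : ∀ m ∈ T, ∃ a b c : ℝ, ∀ q, f m q = a*q.1 + b*q.2 - c) (p : ℝ×ℝ) :
    Convex ℝ (mcell f T p) := by
  have : mcell f T p = ⋂ m ∈ T, {q | 0 < f m q * f m p} := by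
    ext q; simp [mcell]
  rw [this]
  apply convex_iInter₂
  intro m hm
  obtain ⟨a, b, c, hf⟩ := haff m hm
  have heq : {q : ℝ×ℝ | 0 < f m q * f m p}
      = {q : ℝ×ℝ | 0 < (a * f m p)*q.1 + (b * f m p)*q.2 - (c * f m p)} := by
    ext q
    simp only [Set.mem_setOf_eq, hf q]
    constructor <;> intro h <;> nlinarith
  rw [heq]
  exact convex_affine_pos _ _ _

lemma mcell_open {f : Set (ℝ×ℝ) → (ℝ×ℝ) → ℝ} {T : Finset (Set (ℝ×ℝ))}
    (haff : ∀ m ∈ T, ∃ a b c : ℝ, ∀ q, f m q = a*q.1 + b*q.2 - c) (p : ℝ×ℝ) :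
    IsOpen (mcell f T p) := by
  have : mcell f T p = ⋂ m ∈ (↑T : Set (Set (ℝ×ℝ))), {q | 0 < f m q * f m p} := by
    ext q; simp [mcell]
  rw [this]
  apply T.finite_toSet.isOpen_biInter
  intro m hm
  obtain ⟨a, b, c, hf⟩ := haff m hm
  have hcont : Continuous (fun q : ℝ×ℝ => f m q * f m p) := by
    have : (fun q : ℝ×ℝ => f m q * f m p) = fun q => (a*q.1 + b*q.2 - c) * f m p := by
      funext q; rw [hf q]
    rw [this]
    fun_prop
  exact isOpen_lt continuous_const hcont

lemma mcell_self {f : Set (ℝ×ℝ) → (ℝ×ℝ) → ℝ} {T : Finset (Set (ℝ×ℝ))} {p : ℝ×ℝ}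
    (h : ∀ m ∈ T, f m p ≠ 0) : p ∈ mcell f T p := by
  intro m hm
  exact mul_self_pos.mpr (h m hm)

lemma mcell_valid {f : Set (ℝ×ℝ) → (ℝ×ℝ) → ℝ} {T : Finset (Set (ℝ×ℝ))} {p q : ℝ×ℝ}
    (h : q ∈ mcell f T p) : ∀ m ∈ T, f m q ≠ 0 := by
  intro m hm h0
  have := h m hm
  rw [h0, zero_mul] at this
  exact lt_irrefl 0 this

lemma mcell_trans {f : Set (ℝ×ℝ) → (ℝ×ℝ) → ℝ} {T : Finset (Set (ℝ×ℝ))} {p q : ℝ×ℝ}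
    (h : q ∈ mcell f T p) : mcell f T q = mcell f T p := by
  ext x
  simp only [mcell, Set.mem_setOf_eq]
  constructor <;> intro hx m hm
  · exact (sgn_trans (h m hm)).mp (hx m hm)
  · exact (sgn_trans (h m hm)).mpr (hx m hm)

lemma mcell_mem_mcells {f : Set (ℝ×ℝ) → (ℝ×ℝ) → ℝ} {T : Finset (Set (ℝ×ℝ))} {p : ℝ×ℝ}
    (h : ∀ m ∈ T, f m p ≠ 0) : mcell f T p ∈ mcells f T :=
  ⟨p, h, rfl⟩

lemma mcells_finite (f : Set (ℝ×ℝ) → (ℝ×ℝ) → ℝ) (T : Finset (Set (ℝ×ℝ))) :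
    (mcells f T).Finite := by
  classical
  have hsub : mcells f T ⊆ Set.range (fun v : (↥T → Prop) =>
      {q : ℝ×ℝ | ∀ m : ↥T, (v m → 0 < f ↑m q) ∧ (¬ v m → f ↑m q < 0)}) := by
    rintro C ⟨p, hp, rfl⟩
    refine ⟨fun m => 0 < f ↑m p, ?_⟩
    ext q
    simp only [mcell, Set.mem_setOf_eq]
    constructor
    · intro hq m hm
      obtain ⟨h1, h2⟩ := hq ⟨m, hm⟩
      rcases lt_trichotomy (f m p) 0 with h | h | h
      · have := h2 (by push_neg; simpa using h.le)
        nlinarith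
      · exact absurd h (hp m hm)
      · have := h1 h
        nlinarith
    · intro hq m
      have hqm := hq ↑m m.2
      have hpm := hp ↑m m.2
      constructor
      · intro hpos
        nlinarith
      · intro hneg
        push_neg at hneg
        have : f ↑m p < 0 := lt_of_le_of_ne hneg (hp ↑m m.2)
        nlinarith
  exact Set.Finite.subset (Set.finite_range _) hsub


theorem stmt6 (L S : Finset (Set (ℝ × ℝ))) (n : ℕ) (hL : SimpleArrangement L) (hn : L.card = n)
    (hS : S ⊆ L) (hind : IndepLines L S) :
    (S.card : ℝ) ≤ 2 * n / 3 := by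
  classical
  by_contra hcon
  push_neg at hcon
  have hns : 2 * n + 1 ≤ 3 * S.card := by
    have h3 : (0:ℝ) < 3 := by norm_num
    have h1 := (div_lt_iff₀ h3).mp hcon
    have h2 : (2*n : ℝ) < 3*(S.card:ℝ) := by linarith
    have h4 : 2*n < 3*S.card := by exact_mod_cast h2
    omega
  obtain ⟨hline, hcrossL, hconc⟩ := hL
  have hex : ∀ l : Set (ℝ×ℝ), ∃ av bv cv : ℝ, l ∈ L →
      ((av, bv) ≠ ((0:ℝ),(0:ℝ)) ∧ l = {p : ℝ×ℝ | av*p.1 + bv*p.2 = cv}) := by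
    intro l
    by_cases hl : l ∈ L
    · obtain ⟨av, bv, cv, h1, h2⟩ := hline l hl
      exact ⟨av, bv, cv, fun _ => ⟨h1, h2⟩⟩
    · exact ⟨1, 0, 0, fun h => absurd h hl⟩
  choose av bv cv hcoef using hex
  set f : Set (ℝ×ℝ) → (ℝ×ℝ) → ℝ := fun l p => av l * p.1 + bv l * p.2 - cv l with hfdef
  have haff : ∀ m : Set (ℝ×ℝ), ∃ a' b' c' : ℝ, ∀ q : ℝ×ℝ, f m q = a'*q.1 + b'*q.2 - c' :=
    fun m => ⟨av m, bv m, cv m, fun q => rfl⟩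
  have haff' : ∀ (T : Finset (Set (ℝ×ℝ))), ∀ m ∈ T,
      ∃ a' b' c' : ℝ, ∀ q : ℝ×ℝ, f m q = a'*q.1 + b'*q.2 - c' := fun T m _ => haff m
  have hcont : ∀ m : Set (ℝ×ℝ), Continuous (f m) := by
    intro m
    show Continuous (fun p : ℝ×ℝ => av m * p.1 + bv m * p.2 - cv m)
    fun_prop
  have hD : ∀ l ∈ L, 0 < (av l)^2 + (bv l)^2 := fun l hl => sumsq_pos (hcoef l hl).1
  have hmem : ∀ l ∈ L, ∀ p : ℝ×ℝ, p ∈ l ↔ f l p = 0 := by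
    intro l hl p
    have h2 := (hcoef l hl).2
    constructor
    · intro hp
      rw [h2] at hp
      simp only [Set.mem_setOf_eq] at hp
      show av l * p.1 + bv l * p.2 - cv l = 0
      linarith
    · intro hp
      rw [h2]
      simp only [Set.mem_setOf_eq]
      have : av l * p.1 + bv l * p.2 - cv l = 0 := hp
      linarith
  set γ : Set (ℝ×ℝ) → ℝ → ℝ×ℝ := fun l => lparam (av l) (bv l) (cv l) with hγdef
  have hon : ∀ l ∈ L, ∀ t, γ l t ∈ l := by
    intro l hl t
    rw [hmem l hl]
    have := lparam_on (a := av l) (b := bv l) (c := cv l) (hD l hl) t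
    show av l * (γ l t).1 + bv l * (γ l t).2 - cv l = 0
    simp only [hγdef]
    linarith [this]
  have hsurj : ∀ l ∈ L, ∀ p ∈ l, ∃ t, γ l t = p := by
    intro l hl p hp
    apply lparam_surj (hD l hl)
    have : f l p = 0 := (hmem l hl p).mp hp
    have : av l * p.1 + bv l * p.2 - cv l = 0 := this
    linarith
  set A : Set (ℝ×ℝ) → Set (ℝ×ℝ) → ℝ := fun l m => av l * bv m - av m * bv l with hAdef
  have hAne : ∀ l ∈ L, ∀ m ∈ L, l ≠ m → A l m ≠ 0 := by
    intro l hl m hm hne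
    obtain ⟨z, hz⟩ := hcrossL l hl m hm hne
    have hz1 : av l * z.1 + bv l * z.2 = cv l := by
      have := (hmem l hl z).mp hz.1
      have h' : av l * z.1 + bv l * z.2 - cv l = 0 := this
      linarith
    have hz2 : av m * z.1 + bv m * z.2 = cv m := by
      have := (hmem m hm z).mp hz.2
      have h' : av m * z.1 + bv m * z.2 - cv m = 0 := this
      linarith
    have hne' : {p : ℝ×ℝ | av l * p.1 + bv l * p.2 = cv l}
        ≠ {p : ℝ×ℝ | av m * p.1 + bv m * p.2 = cv m} := by
      rw [← (hcoef l hl).2, ← (hcoef m hm).2]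
      exact hne
    exact cross_ne_zero (hD l hl) (hD m hm) hne' hz1 hz2
  set t0 : Set (ℝ×ℝ) → Set (ℝ×ℝ) → ℝ := fun l m => -(f m (γ l 0)) / A l m with ht0def
  have hformula : ∀ l ∈ L, ∀ m ∈ L, l ≠ m → ∀ t, f m (γ l t) = A l m * (t - t0 l m) := by
    intro l hl m hm hne t
    have hA := hAne l hl m hm hne
    have hcomp := lparam_comp (av l) (bv l) (cv l) (av m) (bv m) (cv m) t
    have h1 : f m (γ l t) = A l m * t + f m (γ l 0) := hcomp
    rw [h1]
    simp only [ht0def]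
    field_simp
    ring
  have hzero_t0 : ∀ l ∈ L, ∀ m ∈ L, l ≠ m → γ l (t0 l m) ∈ m := by
    intro l hl m hm hne
    rw [hmem m hm]
    rw [hformula l hl m hm hne]
    ring
  have ht0inj : ∀ l ∈ L, ∀ m ∈ L, ∀ m' ∈ L, l ≠ m → l ≠ m' → m ≠ m' → t0 l m ≠ t0 l m' := by
    intro l hl m hm m' hm' hlm hlm' hmm' heq
    have h1 : γ l (t0 l m) ∈ m := hzero_t0 l hl m hm hlm
    have h2 : γ l (t0 l m) ∈ m' := by
      rw [heq]
      exact hzero_t0 l hl m' hm' hlm'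
    have h3 : γ l (t0 l m) ∈ l := hon l hl _
    have := hconc l hl m hm m' hm' hlm hlm' hmm'
    have : γ l (t0 l m) ∈ l ∩ m ∩ m' := ⟨⟨h3, h1⟩, h2⟩
    rw [hconc l hl m hm m' hm' hlm hlm' hmm'] at this
    exact this
  -- counting function along a line
  set cnt : Set (ℝ×ℝ) → Finset (Set (ℝ×ℝ)) → ℝ → ℕ :=
    fun l T t => (T.filter (fun m => t0 l m < t)).card with hcntdef
  have hoff : ∀ l ∈ L, ∀ T : Finset (Set (ℝ×ℝ)), T ⊆ L → l ∉ T → ∀ t,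
      (∀ m ∈ T, t ≠ t0 l m) → ∀ m ∈ T, f m (γ l t) ≠ 0 := by
    intro l hl T hTL hlT t ht m hm
    rw [hformula l hl m (hTL hm) (fun h => hlT (h ▸ hm))]
    have hA := hAne l hl m (hTL hm) (fun h => hlT (h ▸ hm))
    have := sub_ne_zero.mpr (ht m hm)
    exact mul_ne_zero hA this
  have hcnt_to_cell : ∀ l ∈ L, ∀ T : Finset (Set (ℝ×ℝ)), T ⊆ L → l ∉ T → ∀ u u' : ℝ,
      (∀ m ∈ T, u ≠ t0 l m) → (∀ m ∈ T, u' ≠ t0 l m) → cnt l T u = cnt l T u' →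
      ∀ m ∈ T, 0 < f m (γ l u) * f m (γ l u') := by
    have key : ∀ l ∈ L, ∀ T : Finset (Set (ℝ×ℝ)), T ⊆ L → l ∉ T → ∀ x y : ℝ, x ≤ y →
        cnt l T x = cnt l T y → ∀ m ∈ T, (t0 l m < x ↔ t0 l m < y) := by
      intro l hl T hTL hlT x y hxy hceq m hm
      have hsub : T.filter (fun m => t0 l m < x) ⊆ T.filter (fun m => t0 l m < y) := by
        intro m' hm'
        rw [Finset.mem_filter] at *
        exact ⟨hm'.1, lt_of_lt_of_le hm'.2 hxy⟩
      have hff : T.filter (fun m => t0 l m < x) = T.filter (fun m => t0 l m < y) :=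
        Finset.eq_of_subset_of_card_le hsub (le_of_eq hceq.symm)
      constructor
      · intro h
        have : m ∈ T.filter (fun m => t0 l m < x) := Finset.mem_filter.mpr ⟨hm, h⟩
        rw [hff] at this
        exact (Finset.mem_filter.mp this).2
      · intro h
        have : m ∈ T.filter (fun m => t0 l m < y) := Finset.mem_filter.mpr ⟨hm, h⟩
        rw [← hff] at this
        exact (Finset.mem_filter.mp this).2
    intro l hl T hTL hlT u u' hu hu' hcnteq m hm
    have hlm : l ≠ m := fun h => hlT (h ▸ hm)
    have hA := hAne l hl m (hTL hm) hlm
    rw [hformula l hl m (hTL hm) hlm, hformula l hl m (hTL hm) hlm]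
    rcases le_total u u' with hle | hle
    · exact (samesign hA (hu m hm) (hu' m hm)).mpr (key l hl T hTL hlT u u' hle hcnteq m hm)
    · have := (samesign hA (hu' m hm) (hu m hm)).mpr (key l hl T hTL hlT u' u hle hcnteq.symm m hm)
      nlinarith [this]
  have hcell_to_cnt : ∀ l ∈ L, ∀ T : Finset (Set (ℝ×ℝ)), T ⊆ L → l ∉ T → ∀ u u' : ℝ,
      (∀ m ∈ T, u ≠ t0 l m) → (∀ m ∈ T, u' ≠ t0 l m) →
      (∀ m ∈ T, 0 < f m (γ l u) * f m (γ l u')) → cnt l T u = cnt l T u' := by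
    intro l hl T hTL hlT u u' hu hu' hpos
    have hfil : T.filter (fun m => t0 l m < u) = T.filter (fun m => t0 l m < u') := by
      apply Finset.filter_congr
      intro m hm
      have hlm : l ≠ m := fun h => hlT (h ▸ hm)
      have hA := hAne l hl m (hTL hm) hlm
      have hp := hpos m hm
      rw [hformula l hl m (hTL hm) hlm, hformula l hl m (hTL hm) hlm] at hp
      have := (samesign hA (hu m hm) (hu' m hm)).mp hp
      simp only [this]
    show (T.filter (fun m => t0 l m < u)).card = (T.filter (fun m => t0 l m < u')).card
    rw [hfil]
  -- lower bound on the number of cells of sub-arrangements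
  have hlower : ∀ T : Finset (Set (ℝ×ℝ)), T ⊆ S →
      T.card * (T.card + 1) + 2 ≤ 2 * (mcells f T).ncard := by
    intro T
    induction T using Finset.induction_on with
    | empty =>
      intro _
      have h1 : mcells f ∅ = {Set.univ} := by
        apply Set.Subset.antisymm
        · rintro C ⟨p, hp, rfl⟩
          have : mcell f ∅ p = Set.univ := by
            ext q; simp [mcell]
          simp [this]
        · rintro C hC
          rw [Set.mem_singleton_iff] at hC
          refine ⟨(0,0), by simp, ?_⟩
          rw [hC]; ext q; simp [mcell]
      rw [h1, Set.ncard_singleton]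
      simp
    | @insert l T hlT ih =>
      intro hsub
      have hTS : T ⊆ S := fun m hm => hsub (Finset.mem_insert_of_mem hm)
      have hlS : l ∈ S := hsub (Finset.mem_insert_self l T)
      have hlL : l ∈ L := hS hlS
      have hTL : T ⊆ L := fun m hm => hS (hTS hm)
      have IH := ih hTS
      set k := T.card with hk
      have ht0injT : Set.InjOn (t0 l) T := by
        intro m hm m' hm' heq
        by_contra hne
        exact ht0inj l hlL m (hTL hm) m' (hTL hm') (fun h => hlT (h ▸ hm))
          (fun h => hlT (h ▸ hm')) hne heq
      set F : Finset ℝ := T.image (t0 l) with hF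
      have hFcard : F.card = k := Finset.card_image_of_injOn ht0injT
      have hui : ∀ i : ℕ, ∃ uu : ℝ, i ≤ k → (uu ∉ F ∧ (F.filter (fun x => x < uu)).card = i) := by
        intro i
        by_cases hik : i ≤ k
        · obtain ⟨t, h1, h2⟩ := exists_count F i (by omega)
          exact ⟨t, fun _ => ⟨h1, h2⟩⟩
        · exact ⟨0, fun h => absurd h hik⟩
      choose u hu using hui
      have huoff : ∀ i, i ≤ k → ∀ m ∈ T, u i ≠ t0 l m := by
        intro i hi m hm heq
        exact (hu i hi).1 (heq ▸ Finset.mem_image_of_mem (t0 l) hm)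
      have hucnt : ∀ i, i ≤ k → cnt l T (u i) = i := by
        intro i hi
        have himg : F.filter (fun x => x < u i) = (T.filter (fun m => t0 l m < u i)).image (t0 l) := by
          rw [hF, Finset.filter_image]
        have hinj2 : Set.InjOn (t0 l) (T.filter (fun m => t0 l m < u i)) :=
          ht0injT.mono (by intro x hx; exact Finset.mem_of_mem_filter x hx)
        have := (hu i hi).2
        rw [himg, Finset.card_image_of_injOn hinj2] at this
        exact this
      have hvalid : ∀ i, i ≤ k → ∀ m ∈ T, f m (γ l (u i)) ≠ 0 := fun i hi =>
        hoff l hlL T hTL hlT (u i) (huoff i hi)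
      have hptex : ∀ C : Set (ℝ×ℝ), ∃ p : ℝ×ℝ, C ∈ mcells f T →
          ((∀ m ∈ T, f m p ≠ 0) ∧ f l p ≠ 0 ∧ mcell f T p = C) := by
        intro C
        by_cases hC : C ∈ mcells f T
        · obtain ⟨p0, hp0, rfl⟩ := hC
          by_cases hfl : f l p0 = 0
          · obtain ⟨y, hyC, hyneg⟩ := open_off_line (mcell_open (haff' T) p0)
              (mcell_self hp0) (hD l hlL) one_ne_zero hfl
            have hy0 : f l y ≠ 0 := by
              intro h0
              have : f l y * 1 < 0 := hyneg
              rw [h0, zero_mul] at this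
              exact lt_irrefl 0 this
            exact ⟨y, fun _ => ⟨mcell_valid hyC, hy0, mcell_trans hyC⟩⟩
          · exact ⟨p0, fun _ => ⟨hp0, hfl, rfl⟩⟩
        · exact ⟨(0,0), fun h => absurd h hC⟩
      choose pt hpt using hptex
      have hyex : ∀ i : ℕ, ∃ y : ℝ×ℝ, i ≤ k →
          (y ∈ mcell f T (γ l (u i)) ∧
           f l y * f l (pt (mcell f T (γ l (u i)))) < 0 ∧
           (∀ m ∈ T, f m y ≠ 0) ∧ f l y ≠ 0 ∧ mcell f T y = mcell f T (γ l (u i))) := by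
        intro i
        by_cases hik : i ≤ k
        · have hxv : ∀ m ∈ T, f m (γ l (u i)) ≠ 0 := hvalid i hik
          have hCmem : mcell f T (γ l (u i)) ∈ mcells f T := mcell_mem_mcells hxv
          obtain ⟨hptv, hptl, hpteq⟩ := hpt _ hCmem
          have hfx : f l (γ l (u i)) = 0 := (hmem l hlL _).mp (hon l hlL (u i))
          obtain ⟨y, hyC, hyneg⟩ := open_off_line (mcell_open (haff' T) (γ l (u i)))
            (mcell_self hxv) (hD l hlL) hptl hfx
          have hyneg' : f l y * f l (pt (mcell f T (γ l (u i)))) < 0 := hyneg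
          have hyl : f l y ≠ 0 := by
            intro h0
            rw [h0, zero_mul] at hyneg'
            exact lt_irrefl 0 hyneg'
          exact ⟨y, fun _ => ⟨hyC, hyneg', mcell_valid hyC, hyl, mcell_trans hyC⟩⟩
        · exact ⟨(0,0), fun h => absurd h hik⟩
      choose ypt hy using hyex
      have hTsub : ∀ p q : ℝ×ℝ, q ∈ mcell f (insert l T) p → q ∈ mcell f T p := by
        intro p q hq m hm
        exact hq m (Finset.mem_insert_of_mem hm)
      have hvalid' : ∀ p : ℝ×ℝ, (∀ m ∈ T, f m p ≠ 0) → f l p ≠ 0 →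
          (∀ m ∈ insert l T, f m p ≠ 0) := by
        intro p h1 h2 m hm
        rcases Finset.mem_insert.mp hm with rfl | hm'
        · exact h2
        · exact h1 m hm'
      set E := (fun C => mcell f (insert l T) (pt C)) '' (mcells f T) with hE
      set Dst := (fun i => mcell f (insert l T) (ypt i)) '' (Set.Iic k) with hDstdef
      have hkey : ∀ z w : ℝ×ℝ, (∀ m ∈ insert l T, f m z ≠ 0) →
          mcell f (insert l T) z = mcell f (insert l T) w →
          (mcell f T z = mcell f T w ∧ 0 < f l z * f l w) := by
        intro z w hzv heq
        have hz : z ∈ mcell f (insert l T) w := heq ▸ mcell_self hzv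
        constructor
        · exact mcell_trans (hTsub w z hz)
        · exact hz l (Finset.mem_insert_self l T)
      have hEsub : E ⊆ mcells f (insert l T) := by
        rintro _ ⟨C, hC, rfl⟩
        obtain ⟨h1, h2, h3⟩ := hpt C hC
        exact mcell_mem_mcells (hvalid' _ h1 h2)
      have hDsub : Dst ⊆ mcells f (insert l T) := by
        rintro _ ⟨i, hik, rfl⟩
        obtain ⟨hy1, hy2, hy3, hy4, hy5⟩ := hy i hik
        exact mcell_mem_mcells (hvalid' _ hy3 hy4)
      have hEcard : E.ncard = (mcells f T).ncard := by
        apply Set.ncard_image_of_injOn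
        intro C hC C' hC' heq
        obtain ⟨h1, h2, h3⟩ := hpt C hC
        obtain ⟨h1', h2', h3'⟩ := hpt C' hC'
        have hTeq := (hkey _ _ (hvalid' _ h1 h2) heq).1
        rw [h3, h3'] at hTeq
        exact hTeq
      have hDcard : Dst.ncard = k + 1 := by
        rw [hDstdef, Set.ncard_image_of_injOn ?_]
        · rw [show Set.Iic k = ↑(Finset.Iic k) by ext x; simp]
          rw [Set.ncard_coe_finset, Nat.card_Iic]
        · intro i hi j hj heq
          simp only [Set.mem_Iic] at hi hj
          obtain ⟨hy1, hy2, hy3, hy4, hy5⟩ := hy i hi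
          obtain ⟨hy1', hy2', hy3', hy4', hy5'⟩ := hy j hj
          have hTeq := (hkey _ _ (hvalid' _ hy3 hy4) heq).1
          rw [hy5, hy5'] at hTeq
          have hmm : γ l (u j) ∈ mcell f T (γ l (u i)) := by
            rw [hTeq]
            exact mcell_self (hvalid j hj)
          have hprod : ∀ m ∈ T, 0 < f m (γ l (u i)) * f m (γ l (u j)) := by
            intro m hm
            have h' := hmm m hm
            nlinarith [h']
          have := hcell_to_cnt l hlL T hTL hlT (u i) (u j) (huoff i hi) (huoff j hj) hprod
          rw [hucnt i hi, hucnt j hj] at this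
          exact this
      have hdisj : Disjoint E Dst := by
        rw [Set.disjoint_left]
        rintro _ ⟨C, hC, rfl⟩ hxD
        obtain ⟨i, hik, heq⟩ := hxD
        simp only [Set.mem_Iic] at hik
        obtain ⟨h1, h2, h3⟩ := hpt C hC
        obtain ⟨hy1, hy2, hy3, hy4, hy5⟩ := hy i hik
        have hk2 := hkey _ _ (hvalid' _ hy3 hy4) heq
        have hCeq : mcell f T (γ l (u i)) = C := by
          rw [← hy5, hk2.1, h3]
        rw [hCeq] at hy2
        nlinarith [hk2.2, hy2]
      have hfinT' : (mcells f (insert l T)).Finite := mcells_finite f (insert l T)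
      have hEfin : E.Finite := hfinT'.subset hEsub
      have hDfin : Dst.Finite := hfinT'.subset hDsub
      have hunion : (E ∪ Dst).ncard = E.ncard + Dst.ncard :=
        Set.ncard_union_eq hdisj hEfin hDfin
      have hle2 : (E ∪ Dst).ncard ≤ (mcells f (insert l T)).ncard :=
        Set.ncard_le_ncard (Set.union_subset hEsub hDsub) hfinT'
      have hcard' : (insert l T).card = k + 1 := Finset.card_insert_of_notMem hlT
      rw [hcard']
      have harith : (k+1)*((k+1)+1) + 2 = (k*(k+1) + 2) + 2*(k+1) := by ring
      omega
  -- every cell of the S-arrangement is crossed by a line outside S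
  have hcrossed : ∀ C ∈ mcells f S, ∃ l ∈ L, l ∉ S ∧ (C ∩ l).Nonempty := by
    rintro C ⟨p, hp, rfl⟩
    by_contra hno
    have hno' : ∀ l ∈ L, l ∉ S → ∀ q, ¬(q ∈ mcell f S p ∧ q ∈ l) := by
      intro l hl hls q hq
      exact hno ⟨l, hl, hls, ⟨q, hq⟩⟩
    set C := mcell f S p with hCdef
    have hCopen : IsOpen C := mcell_open (haff' S) p
    have hCpre : IsPreconnected C := (mcell_convex (haff' S) p).isPreconnected
    have hpC : p ∈ C := mcell_self hp
    have hCoff : ∀ q ∈ C, ∀ l ∈ L, q ∉ l := by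
      intro q hq l hl
      by_cases hlS : l ∈ S
      · intro hql
        exact mcell_valid hq l hlS ((hmem l (hS hlS) q).mp hql)
      · intro hql
        exact hno' l hl hlS q ⟨hq, hql⟩
    have hCsub : C ⊆ (linesUnion L)ᶜ := by
      intro q hq hq'
      simp only [linesUnion, Set.mem_iUnion] at hq'
      obtain ⟨l, hl, hql⟩ := hq'
      exact hCoff q hq l hl hql
    have hpU : p ∈ (linesUnion L)ᶜ := hCsub hpC
    have hcc : C = connectedComponentIn (linesUnion L)ᶜ p := by
      apply Set.Subset.antisymm
      · exact hCpre.subset_connectedComponentIn hpC hCsub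
      · intro q hq
        have hK := isPreconnected_connectedComponentIn (x := p) (F := (linesUnion L)ᶜ)
        have hKsub := connectedComponentIn_subset (linesUnion L)ᶜ p
        have hpc : p ∈ connectedComponentIn (linesUnion L)ᶜ p := mem_connectedComponentIn hpU
        intro m hm
        apply sign_const hK (hcont m) ?_ hq hpc
        intro x hx h0
        have hxm : x ∈ m := (hmem m (hS hm) x).mpr h0
        exact (hKsub hx) (by simp only [linesUnion, Set.mem_iUnion]; exact ⟨m, hS hm, hxm⟩)
    have hcell : IsCell L C := ⟨p, hpU, hcc⟩
    have hfr : ∀ q ∈ frontier C, ∃ m ∈ S, f m q = 0 := by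
      intro q hq
      rw [hCopen.frontier_eq] at hq
      obtain ⟨hqc, hqn⟩ := hq
      by_contra hcon2
      push_neg at hcon2
      apply hqn
      intro m hm
      have hcl : closure C ⊆ {x | 0 ≤ f m x * f m p} := by
        apply closure_minimal
        · intro x hx
          exact (hx m hm).le
        · exact isClosed_le continuous_const ((hcont m).mul continuous_const)
      have h1 : 0 ≤ f m q * f m p := hcl hqc
      have h2 : f m q ≠ 0 := hcon2 m hm
      have h3 : f m p ≠ 0 := hp m hm
      rcases lt_or_eq_of_le h1 with h | h
      · exact h
      · exact absurd h.symm (mul_ne_zero h2 h3)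
    obtain ⟨l, hlb, hlS⟩ := Set.not_subset.mp (hind C hcell)
    obtain ⟨hlL, P, Q, hPQ, hseg⟩ := hlb
    have hlS' : l ∉ S := fun h => hlS (by exact_mod_cast h)
    have hsub2 : segment ℝ P Q ⊆ ⋃ m ∈ (↑S : Set (Set (ℝ×ℝ))), (l ∩ m) := by
      intro x hx
      have hxl : x ∈ l := (hseg hx).1
      have hxf : x ∈ frontier C := (hseg hx).2
      obtain ⟨m, hm, hfm⟩ := hfr x hxf
      simp only [Set.mem_iUnion]
      exact ⟨m, hm, hxl, (hmem m (hS hm) x).mpr hfm⟩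
    have hfin : (⋃ m ∈ (↑S : Set (Set (ℝ×ℝ))), (l ∩ m)).Finite := by
      apply Set.Finite.biUnion S.finite_toSet
      intro m hm
      apply Set.Subsingleton.finite
      have hmS : m ∈ S := hm
      exact line_inter_subsingleton (hline l hlL) (hline m (hS hmS))
        (fun h => hlS' (h ▸ hmS))
    exact (seg_infinite hPQ) (hfin.subset hsub2)
  -- upper bound
  have hupper : (mcells f S).ncard ≤ (L \ S).card * (S.card + 1) := by
    have hmap : ∀ C : Set (ℝ×ℝ), ∃ pr : Set (ℝ×ℝ) × ℕ, C ∈ mcells f S →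
        (pr.1 ∈ L \ S ∧ pr.2 ∈ Finset.range (S.card + 1) ∧
          ∃ t, (∀ m ∈ S, t ≠ t0 pr.1 m) ∧ cnt pr.1 S t = pr.2 ∧
            mcell f S (γ pr.1 t) = C) := by
      intro C
      by_cases hC : C ∈ mcells f S
      · obtain ⟨l, hlL, hlS, q, hqC, hql⟩ := hcrossed C hC
        obtain ⟨p0, hp0, hCeq⟩ := hC
        obtain ⟨t, ht⟩ := hsurj l hlL q hql
        have hqC' : q ∈ mcell f S p0 := hCeq ▸ hqC
        have hval : ∀ m ∈ S, f m q ≠ 0 := mcell_valid hqC'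
        refine ⟨(l, cnt l S t), fun _ => ⟨Finset.mem_sdiff.mpr ⟨hlL, hlS⟩, ?_, t, ?_, rfl, ?_⟩⟩
        · rw [Finset.mem_range]
          exact Nat.lt_succ_of_le (Finset.card_filter_le _ _)
        · intro m hm heq
          have hlm : l ≠ m := fun h => hlS (h ▸ hm)
          have hfm : f m q = 0 := by
            rw [← ht, hformula l hlL m (hS hm) hlm, heq]
            ring
          exact hval m hm hfm
        · rw [ht, hCeq]
          exact mcell_trans hqC'
      · exact ⟨((∅ : Set (ℝ×ℝ)), 0), fun h => absurd h hC⟩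
    choose Φ hΦ using hmap
    have hmapsto : ∀ C ∈ mcells f S, Φ C ∈ (((L \ S) ×ˢ Finset.range (S.card + 1) : Finset _) : Set (Set (ℝ×ℝ) × ℕ)) := by
      intro C hC
      obtain ⟨h1, h2, _⟩ := hΦ C hC
      rw [Finset.coe_product]
      exact ⟨h1, h2⟩
    have hinj : Set.InjOn Φ (mcells f S) := by
      intro C hC C' hC' heq
      obtain ⟨h1, h2, t, ht1, ht2, ht3⟩ := hΦ C hC
      obtain ⟨h1', h2', t', ht1', ht2', ht3'⟩ := hΦ C' hC'
      have hll : (Φ C).1 = (Φ C').1 := by rw [heq]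
      have hjj : (Φ C).2 = (Φ C').2 := by rw [heq]
      set l := (Φ C).1 with hldef
      have hlL : l ∈ L := (Finset.mem_sdiff.mp h1).1
      have hlS : l ∉ S := (Finset.mem_sdiff.mp h1).2
      rw [← hll] at ht1' ht2' ht3'
      have hcnt : cnt l S t = cnt l S t' := by rw [ht2, ht2', hjj]
      have hprod := hcnt_to_cell l hlL S hS hlS t t' ht1 ht1' hcnt
      have hmemb : γ l t' ∈ mcell f S (γ l t) := by
        intro m hm
        have := hprod m hm
        nlinarith [this]
      rw [← ht3, ← ht3']
      exact (mcell_trans hmemb).symm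
    have hfin : (((L \ S) ×ˢ Finset.range (S.card + 1) : Finset _) : Set (Set (ℝ×ℝ) × ℕ)).Finite :=
      Finset.finite_toSet _
    have := Set.ncard_le_ncard_of_injOn Φ hmapsto hinj hfin
    rwa [Set.ncard_coe_finset, Finset.card_product, Finset.card_range] at this
  -- final arithmetic
  have hsn : S.card ≤ n := hn ▸ Finset.card_le_card hS
  have hd : (L \ S).card = n - S.card := by
    rw [Finset.card_sdiff_of_subset hS, hn]
  have hlow := hlower S (subset_refl S)
  set s := S.card
  set d := (L \ S).card
  have h1 : s * (s+1) + 2 ≤ 2 * (d * (s+1)) := by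
    calc s * (s+1) + 2 ≤ 2 * (mcells f S).ncard := hlow
    _ ≤ 2 * (d * (s+1)) := by omega
  have h2 : s ≥ 2 * d + 1 := by omega
  nlinarith [h1, h2]
end

section
/- For every q ≥ 0 there exists a simple arrangement G of 2^q lines together with a set W of at most 2^{q+1} vertical lines ('snapshots') such that for every two distinct lines ℓ, ℓ' of G there is a vertical line in W along which ℓ and ℓ' are consecutive in the top-to-bottom order of the arrangement lines. -/
lemma natCast_ne_add_quarter (s t : ℕ) : (s:ℝ) ≠ (t:ℝ) + 1/4 := by
  intro h
  rcases le_or_gt s t with h1 | h1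
  · have h2 : (s:ℝ) ≤ t := by exact_mod_cast h1
    linarith
  · have h2 : (t:ℝ) + 1 ≤ s := by exact_mod_cast h1
    linarith

lemma key_sep (i j k : ℕ) (x : ℝ) (hx : x = ((i:ℝ) + j)/2 + 1/8)
    (hij : i < j) (hk1 : k ≠ i) (hk2 : k ≠ j) :
    (k:ℝ) * x + -(k:ℝ)^2/2 <
      min ((i:ℝ) * x + -(i:ℝ)^2/2) ((j:ℝ) * x + -(j:ℝ)^2/2) ∨
    max ((i:ℝ) * x + -(i:ℝ)^2/2) ((j:ℝ) * x + -(j:ℝ)^2/2) <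
      (k:ℝ) * x + -(k:ℝ)^2/2 := by
  have hIJ : (i:ℝ) + 1 ≤ j := by exact_mod_cast hij
  have hfifj : (i:ℝ) * x + -(i:ℝ)^2/2 ≤ (j:ℝ) * x + -(j:ℝ)^2/2 := by
    subst hx; nlinarith [hIJ]
  rw [min_eq_left hfifj, max_eq_right hfifj]
  rcases (by omega : k < i ∨ (i < k ∧ k < j) ∨ j < k) with h | h | h
  · left
    have h1 : (k:ℝ) + 1 ≤ i := by exact_mod_cast h
    subst hx; nlinarith [h1, hIJ]
  · right
    have h1 : (i:ℝ) + 1 ≤ k := by exact_mod_cast h.1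
    have h2 : (k:ℝ) + 1 ≤ j := by exact_mod_cast h.2
    subst hx; nlinarith [h1, h2]
  · left
    have h1 : (j:ℝ) + 1 ≤ k := by exact_mod_cast h
    subst hx; nlinarith [h1, hIJ]

lemma parab_inj : Function.Injective (fun i : ℕ => ((i:ℝ), -(i:ℝ)^2/2)) := by
  intro a b hab
  have : (a:ℝ) = b := congrArg Prod.fst hab
  exact_mod_cast this


/-- Lines are encoded as (slope, intercept) pairs: the line `y = a * x + b` is the pair `(a, b)`.
A witness set is a set of x-coordinates ("snapshots") such that every pair of distinct lines
appears consecutively in the top-to-bottom order at one of these snapshots. -/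
theorem stmt10 (q : ℕ) : ∃ G : Finset (ℝ × ℝ),
    G.card = 2 ^ q ∧
    (∀ l₁ ∈ G, ∀ l₂ ∈ G, l₁ ≠ l₂ → l₁.1 ≠ l₂.1) ∧
    (∀ l₁ ∈ G, ∀ l₂ ∈ G, ∀ l₃ ∈ G, l₁ ≠ l₂ → l₁ ≠ l₃ → l₂ ≠ l₃ →
      ∀ x : ℝ, ¬(l₁.1 * x + l₁.2 = l₂.1 * x + l₂.2 ∧ l₂.1 * x + l₂.2 = l₃.1 * x + l₃.2)) ∧
    ∃ W : Finset ℝ, W.card ≤ 2 ^ (q + 1) ∧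
      ∀ l ∈ G, ∀ l' ∈ G, l ≠ l' → ∃ x ∈ W,
        (∀ l₁ ∈ G, ∀ l₂ ∈ G, l₁ ≠ l₂ → l₁.1 * x + l₁.2 ≠ l₂.1 * x + l₂.2) ∧
        ∀ l'' ∈ G, l'' ≠ l → l'' ≠ l' →
          (l''.1 * x + l''.2 < min (l.1 * x + l.2) (l'.1 * x + l'.2) ∨
           max (l.1 * x + l.2) (l'.1 * x + l'.2) < l''.1 * x + l''.2) := by
  classical
  refine ⟨(Finset.range (2^q)).image (fun i : ℕ => ((i:ℝ), -(i:ℝ)^2/2)), ?_, ?_, ?_, ?_⟩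
  · rw [Finset.card_image_of_injective _ parab_inj, Finset.card_range]
  · rintro l₁ hl₁ l₂ hl₂ hne
    obtain ⟨a, -, rfl⟩ := Finset.mem_image.mp hl₁
    obtain ⟨b, -, rfl⟩ := Finset.mem_image.mp hl₂
    dsimp only
    exact fun h => hne (congrArg (fun i : ℕ => ((i:ℝ), -(i:ℝ)^2/2)) (Nat.cast_injective h))
  · rintro l₁ hl₁ l₂ hl₂ l₃ hl₃ h12 h13 h23 x ⟨e1, e2⟩
    obtain ⟨a, -, rfl⟩ := Finset.mem_image.mp hl₁
    obtain ⟨b, -, rfl⟩ := Finset.mem_image.mp hl₂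
    obtain ⟨c, -, rfl⟩ := Finset.mem_image.mp hl₃
    have hab : (a:ℝ) ≠ b := fun h => h12 (congrArg (fun i : ℕ => ((i:ℝ), -(i:ℝ)^2/2)) (Nat.cast_injective h))
    have hbc : (b:ℝ) ≠ c := fun h => h23 (congrArg (fun i : ℕ => ((i:ℝ), -(i:ℝ)^2/2)) (Nat.cast_injective h))
    have hac : (a:ℝ) ≠ c := fun h => h13 (congrArg (fun i : ℕ => ((i:ℝ), -(i:ℝ)^2/2)) (Nat.cast_injective h))
    dsimp only at e1 e2
    have k1 : ((a:ℝ) - b) * (2*x - ((a:ℝ)+b)) = 0 := by linear_combination 2*e1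
    have k2 : ((b:ℝ) - c) * (2*x - ((b:ℝ)+c)) = 0 := by linear_combination 2*e2
    have x1 : 2*x = (a:ℝ) + b := by
      rcases mul_eq_zero.mp k1 with h | h
      · exact absurd (sub_eq_zero.mp h) hab
      · linarith [sub_eq_zero.mp h]
    have x2 : 2*x = (b:ℝ) + c := by
      rcases mul_eq_zero.mp k2 with h | h
      · exact absurd (sub_eq_zero.mp h) hbc
      · linarith [sub_eq_zero.mp h]
    exact hac (by linarith)
  · refine ⟨(Finset.range (2^(q+1))).image (fun m : ℕ => (m:ℝ)/2 + 1/8), ?_, ?_⟩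
    · calc _ ≤ (Finset.range (2^(q+1))).card := Finset.card_image_le
        _ = 2 ^ (q+1) := Finset.card_range _
    · rintro l hl l' hl' hne
      obtain ⟨i, hi, rfl⟩ := Finset.mem_image.mp hl
      obtain ⟨j, hj, rfl⟩ := Finset.mem_image.mp hl'
      rw [Finset.mem_range] at hi hj
      have hij : i ≠ j := fun h => hne (by rw [h])
      refine ⟨((i+j : ℕ):ℝ)/2 + 1/8, ?_, ?_, ?_⟩
      · refine Finset.mem_image.mpr ⟨i+j, Finset.mem_range.mpr ?_, rfl⟩
        have : 2^(q+1) = 2 * 2^q := by rw [pow_succ, mul_comm]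
        omega
      · rintro l₁ hl₁ l₂ hl₂ hne' heq
        obtain ⟨a, -, rfl⟩ := Finset.mem_image.mp hl₁
        obtain ⟨b, -, rfl⟩ := Finset.mem_image.mp hl₂
        have hab : (a:ℝ) ≠ b := fun h => hne' (congrArg (fun i : ℕ => ((i:ℝ), -(i:ℝ)^2/2)) (Nat.cast_injective h))
        dsimp only at heq
        have k1 : ((a:ℝ) - b) * (2*(((i+j : ℕ):ℝ)/2 + 1/8) - ((a:ℝ)+b)) = 0 := by
          linear_combination 2*heq
        have x1 : 2*(((i+j : ℕ):ℝ)/2 + 1/8) = (a:ℝ) + b := by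
          rcases mul_eq_zero.mp k1 with h | h
          · exact absurd (sub_eq_zero.mp h) hab
          · linarith [sub_eq_zero.mp h]
        refine natCast_ne_add_quarter (a+b) (i+j) ?_
        push_cast at x1 ⊢
        linarith
      · rintro l'' hl'' hne1 hne2
        obtain ⟨k, -, rfl⟩ := Finset.mem_image.mp hl''
        have hki : k ≠ i := fun h => hne1 (by rw [h])
        have hkj : k ≠ j := fun h => hne2 (by rw [h])
        dsimp only
        rcases lt_or_gt_of_ne hij with h | h
        · exact key_sep i j k _ (by push_cast; ring) h hki hkj
        · rw [min_comm, max_comm]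
          exact key_sep j i k _ (by push_cast; ring) h hkj hki
end

section
/- In a simple arrangement of n lines, one can choose at most ⌈n/2⌉ cells such that every line of the arrangement contains a boundary segment of at least one chosen cell. -/
open Set Metric

lemma isLine_closed {l : Set (ℝ×ℝ)} (h : IsLine l) : IsClosed l := by
  obtain ⟨a, b, c, -, rfl⟩ := h
  exact isClosed_eq (by continuity) continuous_const

lemma linesUnion_closed {L : Finset (Set (ℝ×ℝ))} (h : ∀ l ∈ L, IsLine l) :
    IsClosed (linesUnion L) :=
  L.finite_toSet.isClosed_biUnion (fun l hl => isLine_closed (h l hl))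

lemma mem_closure_ray {Q : Set (ℝ×ℝ)} {x v : ℝ×ℝ} {ε : ℝ} (hε : 0 < ε)
    (h : ∀ s : ℝ, 0 < s → s < ε → x + s • v ∈ Q) : x ∈ closure Q := by
  rw [Metric.mem_closure_iff]
  intro δ hδ
  set s := min (ε/2) (δ/(‖v‖+1)) with hs
  have hvn : (0:ℝ) ≤ ‖v‖ := norm_nonneg v
  have hs0 : 0 < s := lt_min (by positivity) (by positivity)
  refine ⟨x + s • v, h s hs0 (lt_of_le_of_lt (min_le_left _ _) (by linarith)), ?_⟩
  have hd : dist x (x + s•v) = s * ‖v‖ := by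
    rw [dist_eq_norm]
    simp [norm_smul, abs_of_pos hs0]
  rw [hd]
  have h1 : s ≤ δ/(‖v‖+1) := min_le_right _ _
  calc s*‖v‖ ≤ (δ/(‖v‖+1))*‖v‖ := by nlinarith
    _ < δ := by rw [div_mul_eq_mul_div, div_lt_iff₀ (by positivity)]; nlinarith

lemma frontier_mem {L : Finset (Set (ℝ×ℝ))} (hLl : ∀ l ∈ L, IsLine l)
    {Q : Set (ℝ×ℝ)} (hQconv : Convex ℝ Q) {q₀ : ℝ×ℝ} (hq₀ : q₀ ∈ Q)
    (hQU : Q ⊆ (linesUnion L)ᶜ) {x : ℝ×ℝ} (hx : x ∈ linesUnion L)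
    (hxcl : x ∈ closure Q) :
    x ∈ frontier (connectedComponentIn (linesUnion L)ᶜ q₀) := by
  have hU : IsOpen (linesUnion L)ᶜ := (linesUnion_closed hLl).isOpen_compl
  have hsub : Q ⊆ connectedComponentIn (linesUnion L)ᶜ q₀ :=
    hQconv.isPreconnected.subset_connectedComponentIn hq₀ hQU
  rw [(hU.connectedComponentIn).frontier_eq]
  exact ⟨closure_mono hsub hxcl, fun hc => (connectedComponentIn_subset _ _ hc) hx⟩

lemma line_eq_of_det {a₁ b₁ c₁ a₂ b₂ c₂ : ℝ} (h1 : (a₁,b₁) ≠ ((0:ℝ),(0:ℝ)))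
    (h2 : (a₂,b₂) ≠ ((0:ℝ),(0:ℝ)))
    (hD : a₁*b₂ - a₂*b₁ = 0) {p : ℝ×ℝ} (hp1 : a₁*p.1+b₁*p.2 = c₁)
    (hp2 : a₂*p.1+b₂*p.2 = c₂) :
    {q : ℝ×ℝ | a₁*q.1+b₁*q.2 = c₁} = {q : ℝ×ℝ | a₂*q.1+b₂*q.2 = c₂} := by
  rw [Ne, Prod.mk.injEq, not_and_or] at h1 h2
  obtain ⟨t, hta, htb⟩ : ∃ t : ℝ, a₂ = t*a₁ ∧ b₂ = t*b₁ := by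
    rcases eq_or_ne a₁ 0 with ha | ha
    · have hb : b₁ ≠ 0 := h1.resolve_left (by simp [ha])
      have ha2 : a₂ = 0 := by
        subst ha
        rcases mul_eq_zero.mp (by linarith : a₂ * b₁ = 0) with h | h
        · exact h
        · exact absurd h hb
      exact ⟨b₂/b₁, by simp [ha, ha2], by field_simp⟩
    · exact ⟨a₂/a₁, by field_simp, by field_simp; linarith [hD]⟩
  have ht : t ≠ 0 := by
    rintro rfl
    simp at hta htb
    exact (h2.resolve_left (by simp [hta])) htb
  have hc : c₂ = t*c₁ := by rw [← hp1, ← hp2, hta, htb]; ring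
  ext q
  simp only [mem_setOf_eq, hta, htb, hc]
  constructor
  · intro h; rw [← h]; ring
  · intro h
    have : t*(a₁*q.1+b₁*q.2) = t*c₁ := by rw [← h]; ring
    exact mul_left_cancel₀ ht this

lemma bounds_aux {L : Finset (Set (ℝ×ℝ))} (hLl : ∀ l ∈ L, IsLine l)
    {l₁ : Set (ℝ×ℝ)} (hl₁L : l₁ ∈ L)
    {a b c A B C r : ℝ} {p q₀ : ℝ×ℝ}
    (hl₁ : l₁ = {q : ℝ×ℝ | a*q.1+b*q.2 = c})
    (hp1 : a*p.1+b*p.2 = c) (hp2 : A*p.1+B*p.2 = C)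
    (hD : a*B - A*b ≠ 0) (hr : 0 < r)
    (hQU : {q : ℝ×ℝ | dist q p < r ∧ 0 < a*q.1+b*q.2-c ∧ 0 < A*q.1+B*q.2-C} ⊆ (linesUnion L)ᶜ)
    (hq₀ : q₀ ∈ {q : ℝ×ℝ | dist q p < r ∧ 0 < a*q.1+b*q.2-c ∧ 0 < A*q.1+B*q.2-C}) :
    Bounds l₁ (connectedComponentIn (linesUnion L)ᶜ q₀) := by
  set Q := {q : ℝ×ℝ | dist q p < r ∧ 0 < a*q.1+b*q.2-c ∧ 0 < A*q.1+B*q.2-C} with hQdef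
  have hab : a ≠ 0 ∨ b ≠ 0 := by
    by_contra h
    push_neg at h
    exact hD (by rw [h.1, h.2]; ring)
  have hABs : (0:ℝ) < a^2 + b^2 := by rcases hab with h|h <;> positivity
  have hQconv : Convex ℝ Q := by
    have hQ2 : Q = Metric.ball p r ∩ ({q : ℝ×ℝ | c < a*q.1+b*q.2} ∩ {q : ℝ×ℝ | C < A*q.1+B*q.2}) := by
      ext q
      simp only [hQdef, mem_setOf_eq, mem_inter_iff, Metric.mem_ball]
      constructor
      · rintro ⟨h1, h2, h3⟩; exact ⟨h1, by linarith, by linarith⟩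
      · rintro ⟨h1, h2, h3⟩; exact ⟨h1, by linarith, by linarith⟩
    rw [hQ2]
    refine (convex_ball p r).inter (Convex.inter ?_ ?_)
    · exact convex_halfSpace_gt ⟨fun x y => by simp; ring, fun t x => by simp; ring⟩ c
    · exact convex_halfSpace_gt ⟨fun x y => by simp; ring, fun t x => by simp; ring⟩ C
  set d : ℝ×ℝ := ((a*B-A*b) * (-b), (a*B-A*b) * a) with hd
  have hd0 : d ≠ 0 := by
    rw [hd, Ne, Prod.mk.injEq, not_and_or]
    rcases hab with h|h
    · right; exact mul_ne_zero hD h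
    · left; exact mul_ne_zero hD (neg_ne_zero.mpr h)
  set t₀ := r/(4*(‖d‖+1)) with ht₀def
  have hdn : (0:ℝ) ≤ ‖d‖ := norm_nonneg d
  have ht₀ : 0 < t₀ := by positivity
  have ht₀d : 2*t₀*‖d‖ < r/2 := by
    have h : t₀*(4*(‖d‖+1)) = r := by rw [ht₀def]; field_simp
    nlinarith
  have key : ∀ τ:ℝ, t₀ ≤ τ → τ ≤ 2*t₀ →
      (p + τ•d) ∈ l₁ ∩ frontier (connectedComponentIn (linesUnion L)ᶜ q₀) := by
    intro τ h1 h2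
    have hτ : 0 < τ := lt_of_lt_of_le ht₀ h1
    have hτd : ‖τ•d‖ < r/2 := by
      rw [norm_smul, Real.norm_eq_abs, abs_of_pos hτ]
      nlinarith
    have hxl : (p + τ•d) ∈ l₁ := by
      rw [hl₁]
      simp only [mem_setOf_eq, hd, Prod.fst_add, Prod.snd_add, Prod.smul_fst,
        Prod.smul_snd, smul_eq_mul]
      linear_combination hp1
    refine ⟨hxl, ?_⟩
    have hxU : (p + τ•d) ∈ linesUnion L := by
      simp only [linesUnion, mem_iUnion]
      exact ⟨l₁, hl₁L, hxl⟩
    refine frontier_mem hLl hQconv hq₀ hQU hxU ?_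
    set w : ℝ×ℝ := (a, b) with hw
    have hwn : (0:ℝ) ≤ ‖w‖ := norm_nonneg w
    set ε := min (τ*(a*B-A*b)^2/(|A*a+B*b|+1)) (r/(2*(‖w‖+1))) with hε
    have hε0 : 0 < ε := by
      apply lt_min
      · have : (0:ℝ) < (a*B-A*b)^2 := by positivity
        positivity
      · positivity
    apply mem_closure_ray hε0
    intro s hs0 hsε
    have hs1 : s < τ*(a*B-A*b)^2/(|A*a+B*b|+1) := lt_of_lt_of_le hsε (min_le_left _ _)
    have hs2 : s < r/(2*(‖w‖+1)) := lt_of_lt_of_le hsε (min_le_right _ _)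
    refine ⟨?_, ?_, ?_⟩
    · -- dist < r
      have heq : p + τ•d + s•w - p = τ•d + s•w := by abel
      rw [dist_eq_norm, heq]
      have hsw : ‖s•w‖ < r/2 := by
        rw [norm_smul, Real.norm_eq_abs, abs_of_pos hs0]
        rw [lt_div_iff₀ (by positivity)] at hs2
        nlinarith
      calc ‖τ•d + s•w‖ ≤ ‖τ•d‖ + ‖s•w‖ := norm_add_le _ _
        _ < r := by linarith
    · -- first halfplane: = s*(a^2+b^2)
      have : a*(p + τ•d + s•w).1 + b*(p + τ•d + s•w).2 - c = s*(a^2+b^2) := by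
        simp only [hd, hw, Prod.fst_add, Prod.snd_add, Prod.smul_fst, Prod.smul_snd,
          smul_eq_mul]
        linear_combination hp1
      rw [this]
      positivity
    · -- second halfplane: = τ*D^2 + s*(A*a+B*b)
      have heq2 : A*(p + τ•d + s•w).1 + B*(p + τ•d + s•w).2 - C
          = τ*(a*B-A*b)^2 + s*(A*a+B*b) := by
        simp only [hd, hw, Prod.fst_add, Prod.snd_add, Prod.smul_fst, Prod.smul_snd,
          smul_eq_mul]
        linear_combination hp2
      rw [heq2]
      rw [div_eq_mul_inv] at hs1
      have habs : |A*a+B*b| + 1 > 0 := by positivity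
      have h3 : s * (|A*a+B*b| + 1) < τ*(a*B-A*b)^2 := by
        rw [lt_mul_inv_iff₀ habs] at hs1
        linarith [hs1]
      nlinarith [neg_abs_le (A*a+B*b), le_abs_self (A*a+B*b), hs0]
  refine ⟨p + t₀•d, p + (2*t₀)•d, ?_, ?_⟩
  · intro heq
    have h1 : t₀•d = (2*t₀)•d := add_left_cancel heq
    have h2 : (2*t₀ - t₀)•d = 0 := by rw [sub_smul, ← h1]; simp
    rw [smul_eq_zero] at h2
    rcases h2 with h|h
    · linarith [ht₀]
    · exact hd0 h
  · rintro z ⟨u, v, hu, hv, huv, rfl⟩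
    have hz' : u•(p+t₀•d) + v•(p+(2*t₀)•d) = (u+v)•p + (u*t₀+v*(2*t₀))•d := by
      module
    rw [hz', huv, one_smul]
    exact key _ (by nlinarith) (by nlinarith)

lemma pair_lemma {L : Finset (Set (ℝ×ℝ))} (hL : SimpleArrangement L)
    {l₁ l₂ : Set (ℝ×ℝ)} (h₁ : l₁ ∈ L) (h₂ : l₂ ∈ L) (hne : l₁ ≠ l₂) :
    ∃ c, IsCell L c ∧ Bounds l₁ c ∧ Bounds l₂ c := by
  classical
  obtain ⟨hlines, hcross, hnc⟩ := hL
  obtain ⟨a₁, b₁, c₁, hab₁, hl₁⟩ := hlines l₁ h₁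
  obtain ⟨a₂, b₂, c₂, hab₂, hl₂⟩ := hlines l₂ h₂
  obtain ⟨p, hp₁, hp₂⟩ := hcross l₁ h₁ l₂ h₂ hne
  have hp1 : a₁*p.1+b₁*p.2 = c₁ := by rw [hl₁] at hp₁; exact hp₁
  have hp2 : a₂*p.1+b₂*p.2 = c₂ := by rw [hl₂] at hp₂; exact hp₂
  have hD : a₁*b₂ - a₂*b₁ ≠ 0 := by
    intro h0
    exact hne (hl₁.trans ((line_eq_of_det hab₁ hab₂ h0 hp1 hp2).trans hl₂.symm))
  -- ball avoiding the other lines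
  set S := (L.erase l₁).erase l₂ with hS
  have hSlines : ∀ l ∈ S, IsLine l := fun l hl =>
    hlines l (Finset.mem_of_mem_erase (Finset.mem_of_mem_erase hl))
  have hpS : p ∉ linesUnion S := by
    intro hp
    simp only [linesUnion, mem_iUnion] at hp
    obtain ⟨l, hlS, hpl⟩ := hp
    have hl2' : l ≠ l₂ := Finset.ne_of_mem_erase hlS
    have hlS' := Finset.mem_of_mem_erase hlS
    have hl1' : l ≠ l₁ := Finset.ne_of_mem_erase hlS'
    have hlL : l ∈ L := Finset.mem_of_mem_erase hlS'
    have hempty := hnc l₁ h₁ l₂ h₂ l hlL hne hl1'.symm hl2'.symm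
    have hpmem : p ∈ l₁ ∩ l₂ ∩ l := ⟨⟨hp₁, hp₂⟩, hpl⟩
    rw [hempty] at hpmem
    exact hpmem
  obtain ⟨r, hr, hball⟩ :=
    Metric.isOpen_iff.mp (linesUnion_closed hSlines).isOpen_compl p hpS
  -- reduce to the case of positive determinant
  have main : ∀ A B C : ℝ, l₂ = {q : ℝ×ℝ | A*q.1+B*q.2 = C} → A*p.1+B*p.2 = C →
      0 < a₁*B - A*b₁ → ∃ c, IsCell L c ∧ Bounds l₁ c ∧ Bounds l₂ c := by
    intro A B C hl₂' hp2' hDpos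
    set v : ℝ×ℝ := (B-b₁, a₁-A) with hv
    have hvn : (0:ℝ) ≤ ‖v‖ := norm_nonneg v
    set s₀ := r/(2*(‖v‖+1)) with hs₀
    have hs₀pos : 0 < s₀ := by positivity
    set q₀ := p + s₀•v with hq₀def
    have hdist : dist q₀ p < r := by
      rw [hq₀def, dist_eq_norm, add_sub_cancel_left, norm_smul, Real.norm_eq_abs,
        abs_of_pos hs₀pos]
      have hfs : s₀*(2*(‖v‖+1)) = r := by rw [hs₀]; field_simp
      nlinarith
    have hval1 : a₁*q₀.1+b₁*q₀.2-c₁ = s₀*(a₁*B-A*b₁) := by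
      rw [hq₀def]
      simp only [hv, Prod.fst_add, Prod.snd_add, Prod.smul_fst, Prod.smul_snd, smul_eq_mul]
      linear_combination hp1
    have hval2 : A*q₀.1+B*q₀.2-C = s₀*(a₁*B-A*b₁) := by
      rw [hq₀def]
      simp only [hv, Prod.fst_add, Prod.snd_add, Prod.smul_fst, Prod.smul_snd, smul_eq_mul]
      linear_combination hp2'
    have hq₀Q : q₀ ∈ {q : ℝ×ℝ | dist q p < r ∧ 0 < a₁*q.1+b₁*q.2-c₁ ∧ 0 < A*q.1+B*q.2-C} := by
      refine ⟨hdist, ?_, ?_⟩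
      · rw [hval1]; positivity
      · rw [hval2]; positivity
    have hQU : {q : ℝ×ℝ | dist q p < r ∧ 0 < a₁*q.1+b₁*q.2-c₁ ∧ 0 < A*q.1+B*q.2-C}
        ⊆ (linesUnion L)ᶜ := by
      rintro q ⟨hq1, hq2, hq3⟩ hq
      simp only [linesUnion, mem_iUnion] at hq
      obtain ⟨l, hlL, hql⟩ := hq
      rcases eq_or_ne l l₁ with rfl | hne1
      · rw [hl₁] at hql
        have : a₁*q.1+b₁*q.2 = c₁ := hql
        linarith
      rcases eq_or_ne l l₂ with rfl | hne2
      · rw [hl₂'] at hql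
        have : A*q.1+B*q.2 = C := hql
        linarith
      have hlS : l ∈ S := Finset.mem_erase.mpr ⟨hne2, Finset.mem_erase.mpr ⟨hne1, hlL⟩⟩
      have hqS : q ∈ linesUnion S := by
        simp only [linesUnion, mem_iUnion]; exact ⟨l, hlS, hql⟩
      exact hball (Metric.mem_ball.mpr hq1) hqS
    refine ⟨connectedComponentIn (linesUnion L)ᶜ q₀, ⟨q₀, hQU hq₀Q, rfl⟩, ?_, ?_⟩
    · exact bounds_aux hlines h₁ hl₁ hp1 hp2' (ne_of_gt hDpos) hr hQU hq₀Q
    · have hQU' : {q : ℝ×ℝ | dist q p < r ∧ 0 < A*q.1+B*q.2-C ∧ 0 < a₁*q.1+b₁*q.2-c₁}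
          ⊆ (linesUnion L)ᶜ := by
        rintro q ⟨x, y, z⟩
        exact hQU ⟨x, z, y⟩
      have hq₀Q' : q₀ ∈ {q : ℝ×ℝ | dist q p < r ∧ 0 < A*q.1+B*q.2-C ∧ 0 < a₁*q.1+b₁*q.2-c₁} :=
        ⟨hq₀Q.1, hq₀Q.2.2, hq₀Q.2.1⟩
      have hD2 : A*b₁ - a₁*B ≠ 0 := by intro h; exact (ne_of_gt hDpos) (by linarith)
      exact bounds_aux hlines h₂ hl₂' hp2' hp1 hD2 hr hQU' hq₀Q'
  rcases hD.lt_or_gt with hlt | hgt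
  · refine main (-a₂) (-b₂) (-c₂) ?_ (by linarith) (by linarith)
    rw [hl₂]
    ext q
    simp only [mem_setOf_eq]
    constructor <;> intro h <;> linarith
  · exact main a₂ b₂ c₂ hl₂ hp2 hgt

lemma single_lemma {l₀ : Set (ℝ×ℝ)} (h : IsLine l₀) :
    ∃ c, IsCell {l₀} c ∧ Bounds l₀ c := by
  obtain ⟨a, b, cc, hab, hl⟩ := h
  have hab' := hab
  rw [Ne, Prod.mk.injEq, not_and_or] at hab'
  have habs : (0:ℝ) < a^2+b^2 := by rcases hab' with h|h <;> positivity
  obtain ⟨p, hp⟩ : ∃ p : ℝ×ℝ, a*p.1+b*p.2 = cc := by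
    rcases eq_or_ne a 0 with ha | ha
    · have hb : b ≠ 0 := hab'.resolve_left (by simp [ha])
      exact ⟨(0, cc/b), by field_simp; ring⟩
    · exact ⟨(cc/a, 0), by field_simp; ring⟩
  set v : ℝ×ℝ := (a-b, a+b) with hv
  have hvn : (0:ℝ) ≤ ‖v‖ := norm_nonneg v
  set s₀ := 1/(2*(‖v‖+1)) with hs₀
  have hs₀pos : 0 < s₀ := by positivity
  set q₀ := p + s₀•v with hq₀def
  set C := (-b)*p.1 + a*p.2 with hC
  have hLl : ∀ l ∈ ({l₀} : Finset (Set (ℝ×ℝ))), IsLine l := by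
    intro l hlm
    rw [Finset.mem_singleton] at hlm
    subst hlm
    exact ⟨a, b, cc, hab, hl⟩
  have hD : a*a - (-b)*b ≠ 0 := by
    intro h
    exact (ne_of_gt habs) (by nlinarith)
  have hdist : dist q₀ p < 1 := by
    rw [hq₀def, dist_eq_norm, add_sub_cancel_left, norm_smul, Real.norm_eq_abs,
      abs_of_pos hs₀pos]
    have hfs : s₀*(2*(‖v‖+1)) = 1 := by rw [hs₀]; field_simp
    nlinarith
  have hval1 : a*q₀.1+b*q₀.2-cc = s₀*(a^2+b^2) := by
    rw [hq₀def]
    simp only [hv, Prod.fst_add, Prod.snd_add, Prod.smul_fst, Prod.smul_snd, smul_eq_mul]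
    linear_combination hp
  have hval2 : (-b)*q₀.1+a*q₀.2-C = s₀*(a^2+b^2) := by
    rw [hq₀def, hC]
    simp only [hv, Prod.fst_add, Prod.snd_add, Prod.smul_fst, Prod.smul_snd, smul_eq_mul]
    ring
  have hq₀Q : q₀ ∈ {q : ℝ×ℝ | dist q p < 1 ∧ 0 < a*q.1+b*q.2-cc ∧ 0 < (-b)*q.1+a*q.2-C} := by
    refine ⟨hdist, ?_, ?_⟩
    · rw [hval1]; positivity
    · rw [hval2]; positivity
  have hQU : {q : ℝ×ℝ | dist q p < 1 ∧ 0 < a*q.1+b*q.2-cc ∧ 0 < (-b)*q.1+a*q.2-C}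
      ⊆ (linesUnion {l₀})ᶜ := by
    rintro q ⟨hq1, hq2, hq3⟩ hq
    simp only [linesUnion, mem_iUnion, Finset.mem_singleton] at hq
    obtain ⟨l, rfl, hql⟩ := hq
    rw [hl] at hql
    have : a*q.1+b*q.2 = cc := hql
    linarith
  refine ⟨connectedComponentIn (linesUnion {l₀})ᶜ q₀, ⟨q₀, hQU hq₀Q, rfl⟩, ?_⟩
  exact bounds_aux hLl (Finset.mem_singleton_self l₀) hl hp rfl hD one_pos hQU hq₀Q

lemma cover_aux (L : Finset (Set (ℝ×ℝ))) (hL : SimpleArrangement L) :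
    ∀ n : ℕ, ∀ S : Finset (Set (ℝ×ℝ)), S ⊆ L → S.card ≤ n →
    ∃ C : Finset (Set (ℝ×ℝ)), (∀ c ∈ C, IsCell L c) ∧ C.card ≤ (S.card + 1)/2 ∧
      ∀ l ∈ S, ∃ c ∈ C, Bounds l c := by
  classical
  intro n
  induction n with
  | zero =>
    intro S _ hcard
    have : S = ∅ := Finset.card_eq_zero.mp (Nat.le_zero.mp hcard)
    subst this
    exact ⟨∅, by simp, by simp, by simp⟩
  | succ n ih =>
    intro S hSL hcard
    rcases lt_or_ge S.card 2 with hS2 | hS2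
    · rcases (by omega : S.card = 0 ∨ S.card = 1) with h0 | h1
      · have : S = ∅ := Finset.card_eq_zero.mp h0
        subst this
        exact ⟨∅, by simp, by simp, by simp⟩
      · obtain ⟨l, rfl⟩ := Finset.card_eq_one.mp h1
        have hlL : l ∈ L := hSL (Finset.mem_singleton_self l)
        rcases lt_or_ge 1 L.card with hL2 | hL1
        · obtain ⟨l₂, hl₂L, hl₂ne⟩ := Finset.exists_mem_ne hL2 l
          obtain ⟨c, hc, hb1, _⟩ := pair_lemma hL hlL hl₂L hl₂ne.symm
          refine ⟨{c}, by simpa using hc, by simp, ?_⟩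
          intro l' hl'
          rw [Finset.mem_singleton] at hl'
          subst hl'
          exact ⟨c, Finset.mem_singleton_self c, hb1⟩
        · have hLS : L = {l} := by
            apply Finset.eq_of_subset_of_card_le ?_ ?_
            · intro x hx
              rw [Finset.mem_singleton]
              by_contra hne
              have : 1 < L.card := Finset.one_lt_card.mpr ⟨x, hx, l, hlL, hne⟩
              omega
            · simpa using Finset.card_pos.mpr ⟨l, hlL⟩
          obtain ⟨c, hc, hb⟩ := single_lemma (hL.1 l hlL)
          rw [← hLS] at hc
          exact ⟨{c}, by simpa using hc, by simp, fun l' hl' => by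
            rw [Finset.mem_singleton] at hl'; subst hl'; exact ⟨c, Finset.mem_singleton_self c, hb⟩⟩
    · obtain ⟨l₁, hl₁S, l₂, hl₂S, hne⟩ := Finset.one_lt_card.mp hS2
      set S' := (S.erase l₁).erase l₂ with hS'
      have hS'card : S'.card = S.card - 2 := by
        rw [hS', Finset.card_erase_of_mem (Finset.mem_erase.mpr ⟨hne.symm, hl₂S⟩),
          Finset.card_erase_of_mem hl₁S]
        omega
      have hS'L : S' ⊆ L := fun x hx =>
        hSL (Finset.mem_of_mem_erase (Finset.mem_of_mem_erase hx))
      obtain ⟨C', hC'cell, hC'card, hC'cov⟩ := ih S' hS'L (by omega)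
      obtain ⟨c, hc, hb1, hb2⟩ := pair_lemma hL (hSL hl₁S) (hSL hl₂S) hne
      refine ⟨insert c C', ?_, ?_, ?_⟩
      · intro c' hc'
        rcases Finset.mem_insert.mp hc' with rfl | h
        · exact hc
        · exact hC'cell c' h
      · calc (insert c C').card ≤ C'.card + 1 := Finset.card_insert_le _ _
          _ ≤ (S'.card + 1)/2 + 1 := by omega
          _ ≤ (S.card + 1)/2 := by omega
      · intro l hlS
        rcases eq_or_ne l l₁ with rfl | hne1
        · exact ⟨c, Finset.mem_insert_self _ _, hb1⟩
        rcases eq_or_ne l l₂ with rfl | hne2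
        · exact ⟨c, Finset.mem_insert_self _ _, hb2⟩
        have hlS' : l ∈ S' := Finset.mem_erase.mpr ⟨hne2, Finset.mem_erase.mpr ⟨hne1, hlS⟩⟩
        obtain ⟨c', hc'C, hc'b⟩ := hC'cov l hlS'
        exact ⟨c', Finset.mem_insert_of_mem hc'C, hc'b⟩

theorem stmt15 (L : Finset (Set (ℝ × ℝ))) (hL : SimpleArrangement L) :
    ∃ C : Finset (Set (ℝ × ℝ)), (∀ c ∈ C, IsCell L c) ∧ C.card ≤ (L.card + 1) / 2 ∧
      ∀ l ∈ L, ∃ c ∈ C, Bounds l c :=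
  cover_aux L hL L.card L subset_rfl le_rfl
end

section
/- There exists a simple arrangement of n lines in which every cell is bounded by at most 4 lines, and consequently any set of cells touching all n lines has size at least n/4. -/
namespace Stmt17


noncomputable def bb (k : ℕ) : ℝ := 2/3 * (1 - (-(2⁻¹:ℝ))^k)
noncomputable def cc (k : ℕ) : ℝ := 100^k

lemma cc_pos (k : ℕ) : 0 < cc k := by unfold cc; positivity

lemma cc_mul (k j : ℕ) (h : k < j) : 100 * cc k ≤ cc j := by
  have : (100:ℝ)^(k+1) ≤ 100^j := pow_le_pow_right₀ (by norm_num) (by omega)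
  calc (100:ℝ) * cc k = 100^(k+1) := by rw [cc, pow_succ]; ring
  _ ≤ cc j := this

lemma neg_one_sq_pow (k : ℕ) : ((-1:ℝ)^k) * ((-1:ℝ)^k) = 1 := by
  rw [← mul_pow]; norm_num

lemma half_pow_pos (k : ℕ) : 0 < ((2:ℝ)⁻¹)^k := by positivity

lemma bbdiff {k j : ℕ} (h : k < j) :
    ∃ r : ℝ, bb j - bb k = (-1)^k * r ∧ ((2:ℝ)⁻¹)^k/3 ≤ r ∧ r ≤ ((2:ℝ)⁻¹)^k := by
  have hneg : ∀ m : ℕ, (-(2⁻¹:ℝ))^m = (-1)^m * (2⁻¹:ℝ)^m := fun m => by rw [neg_pow]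
  have hdiff : bb j - bb k = 2/3 * ((-1)^k * (2⁻¹:ℝ)^k - (-1)^j * (2⁻¹:ℝ)^j) := by
    simp only [bb, hneg]; ring
  set t : ℝ := (-1:ℝ)^k * (-1)^j with ht
  have hkk := neg_one_sq_pow k
  refine ⟨2/3 * ((2⁻¹:ℝ)^k - t * (2⁻¹:ℝ)^j), ?_, ?_, ?_⟩
  · have hkt : (-1:ℝ)^k * t = (-1)^j := by rw [ht, ← mul_assoc, hkk, one_mul]
    rw [hdiff]
    linear_combination (2/3 * (2⁻¹:ℝ)^j) * hkt
  all_goals {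
    have hjk : ((2:ℝ)⁻¹)^j ≤ ((2:ℝ)⁻¹)^k / 2 := by
      have : ((2:ℝ)⁻¹)^j ≤ ((2:ℝ)⁻¹)^(k+1) :=
        pow_le_pow_of_le_one (by norm_num) (by norm_num) (by omega)
      calc ((2:ℝ)⁻¹)^j ≤ ((2:ℝ)⁻¹)^(k+1) := this
      _ = ((2:ℝ)⁻¹)^k / 2 := by rw [pow_succ]; ring
    have hpj := half_pow_pos j
    have htt : t = 1 ∨ t = -1 := by
      rw [ht]
      rcases Nat.even_or_odd k with he | he <;> rcases Nat.even_or_odd j with hj | hj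
      · left; rw [he.neg_one_pow, hj.neg_one_pow]; norm_num
      · right; rw [he.neg_one_pow, hj.neg_one_pow]; norm_num
      · right; rw [he.neg_one_pow, hj.neg_one_pow]; norm_num
      · left; rw [he.neg_one_pow, hj.neg_one_pow]; norm_num
    rcases htt with h1 | h1 <;> rw [h1] <;> linarith
  }


-- copies from chunk1 (will merge later)
noncomputable instance : DecidableEq (Set (ℝ × ℝ)) := Classical.decEq _

def lineK (k : ℕ) : Set (ℝ × ℝ) := {p | p.1 + bb k * p.2 = cc k}

noncomputable def arr (n : ℕ) : Finset (Set (ℝ × ℝ)) := (Finset.range n).image lineK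

lemma cc_lt (k j : ℕ) (h : k < j) : cc k < cc j := by
  have := cc_mul k j h; have := cc_pos k; linarith

lemma bb_ne {k j : ℕ} (h : k < j) : bb k ≠ bb j := by
  obtain ⟨r, hr, hr1, hr2⟩ := bbdiff h
  have hrpos : 0 < r := lt_of_lt_of_le (by have := half_pow_pos k; linarith) hr1
  intro he
  rw [he, sub_self] at hr
  have : ((-1:ℝ)^k) ≠ 0 := by positivity
  have := mul_ne_zero this (ne_of_gt hrpos)
  exact this hr.symm

lemma lineK_inj : Function.Injective lineK := by
  intro k j he
  by_contra hne
  have hk : ((cc k, 0) : ℝ×ℝ) ∈ lineK k := by simp [lineK]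
  rw [he] at hk
  simp only [lineK, Set.mem_setOf_eq] at hk
  have : cc k = cc j := by simpa using hk
  rcases Nat.lt_or_ge k j with h | h
  · exact absurd this (ne_of_lt (cc_lt k j h))
  · have : j < k := by omega
    exact absurd ‹cc k = cc j›.symm (ne_of_lt (cc_lt j k this))

lemma arr_card (n : ℕ) : (arr n).card = n := by
  rw [arr, Finset.card_image_of_injective _ lineK_inj, Finset.card_range]

lemma mem_arr {n : ℕ} {l : Set (ℝ×ℝ)} (h : l ∈ arr n) : ∃ k, k < n ∧ l = lineK k := by
  rw [arr, Finset.mem_image] at h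
  obtain ⟨k, hk, he⟩ := h
  exact ⟨k, Finset.mem_range.mp hk, he.symm⟩

lemma lineK_mem_arr {n k : ℕ} (h : k < n) : lineK k ∈ arr n :=
  Finset.mem_image_of_mem _ (Finset.mem_range.mpr h)

/-- Two distinct lines meet in at most one point. -/
lemma unique_cross {i j : ℕ} (hij : i ≠ j) {p q : ℝ×ℝ}
    (hpi : p ∈ lineK i) (hpj : p ∈ lineK j) (hqi : q ∈ lineK i) (hqj : q ∈ lineK j) :
    p = q := by
  simp only [lineK, Set.mem_setOf_eq] at *
  have h2 : (bb i - bb j) * (p.2 - q.2) = 0 := by linarith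
  have hbb : bb i ≠ bb j := by
    rcases Nat.lt_or_ge i j with h | h
    · exact bb_ne h
    · exact (bb_ne (by omega : j < i)).symm
  have hy : p.2 = q.2 := by
    rcases mul_eq_zero.mp h2 with h | h
    · exact absurd (sub_eq_zero.mp h) hbb
    · linarith [sub_eq_zero.mp h]
  have hx : p.1 = q.1 := by rw [hy] at hpi; linarith
  exact Prod.ext hx hy

/-- Any two lines of the family cross. -/
lemma cross_nonempty {i j : ℕ} (hij : i ≠ j) : (lineK i ∩ lineK j).Nonempty := by
  have key : ∀ a b : ℕ, a < b → (lineK a ∩ lineK b).Nonempty := by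
    intro a b hab
    have hbb : bb b - bb a ≠ 0 := sub_ne_zero.mpr (bb_ne hab).symm
    refine ⟨(cc a - bb a * ((cc b - cc a)/(bb b - bb a)), (cc b - cc a)/(bb b - bb a)), ?_, ?_⟩
    · simp only [lineK, Set.mem_setOf_eq]; ring
    · simp only [lineK, Set.mem_setOf_eq]; field_simp; ring
  rcases Nat.lt_or_ge i j with h | h
  · exact key i j h
  · obtain ⟨pt, h1, h2⟩ := key j i (by omega)
    exact ⟨pt, h2, h1⟩

/-- y-coordinate bounds at a crossing. -/
lemma cross_y_bounds {i j : ℕ} (h : i < j) {pt : ℝ×ℝ}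
    (hi : pt ∈ lineK i) (hj : pt ∈ lineK j) :
    (99/100) * cc j ≤ |pt.2| * ((2:ℝ)⁻¹)^i ∧ |pt.2| * ((2:ℝ)⁻¹)^i ≤ 3 * cc j := by
  simp only [lineK, Set.mem_setOf_eq] at hi hj
  obtain ⟨r, hr, hr1, hr2⟩ := bbdiff h
  have hrpos : 0 < r := lt_of_lt_of_le (by have := half_pow_pos i; linarith) hr1
  have heq : (bb j - bb i) * pt.2 = cc j - cc i := by linarith
  have habs : r * |pt.2| = cc j - cc i := by
    have : |(bb j - bb i) * pt.2| = |cc j - cc i| := by rw [heq]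
    rw [abs_mul, hr, abs_mul, abs_pow] at this
    simp only [abs_neg, abs_one, one_pow, one_mul] at this
    rw [abs_of_pos hrpos] at this
    rw [this]
    rw [abs_of_pos (by linarith [cc_lt i j h] : (0:ℝ) < cc j - cc i)]
  have hccj : cc i ≤ cc j / 100 := by have := cc_mul i j h; linarith
  have hcpos := cc_pos j
  have hy : 0 ≤ |pt.2| := abs_nonneg _
  constructor
  · calc (99/100) * cc j ≤ cc j - cc i := by linarith
    _ = r * |pt.2| := habs.symm
    _ ≤ ((2:ℝ)⁻¹)^i * |pt.2| := mul_le_mul_of_nonneg_right hr2 hy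
    _ = |pt.2| * ((2:ℝ)⁻¹)^i := mul_comm _ _
  · have h3 : |pt.2| * ((2:ℝ)⁻¹)^i ≤ 3 * (r * |pt.2|) := by nlinarith
    rw [habs] at h3
    have := cc_pos i
    linarith

/-- No three lines concurrent (sorted version). -/
lemma no3_sorted {i j k : ℕ} (hij : i < j) (hjk : j < k) {pt : ℝ×ℝ}
    (hi : pt ∈ lineK i) (hj : pt ∈ lineK j) (hk : pt ∈ lineK k) : False := by
  obtain ⟨_, hub⟩ := cross_y_bounds hij hi hj
  obtain ⟨hlb, _⟩ := cross_y_bounds hjk hj hk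
  have h1 : ((2:ℝ)⁻¹)^j ≤ ((2:ℝ)⁻¹)^i :=
    pow_le_pow_of_le_one (by norm_num) (by norm_num) (le_of_lt hij)
  have hy : 0 ≤ |pt.2| := abs_nonneg _
  have h2 : |pt.2| * ((2:ℝ)⁻¹)^j ≤ |pt.2| * ((2:ℝ)⁻¹)^i := mul_le_mul_of_nonneg_left h1 hy
  have h3 : (99/100) * cc k ≤ 3 * cc j := by linarith
  have h4 : 100 * cc j ≤ cc k := cc_mul j k hjk
  have := cc_pos j
  linarith

lemma no3 {a b c : ℕ} (hab : a ≠ b) (hac : a ≠ c) (hbc : b ≠ c) {pt : ℝ×ℝ}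
    (ha : pt ∈ lineK a) (hb : pt ∈ lineK b) (hc : pt ∈ lineK c) : False := by
  rcases Nat.lt_trichotomy a b with h1 | h1 | h1
  · rcases Nat.lt_trichotomy b c with h2 | h2 | h2
    · exact no3_sorted h1 h2 ha hb hc
    · exact hbc h2
    · rcases Nat.lt_trichotomy a c with h3 | h3 | h3
      · exact no3_sorted h3 h2 ha hc hb
      · exact hac h3
      · exact no3_sorted h3 h1 hc ha hb
  · exact hab h1
  · rcases Nat.lt_trichotomy a c with h2 | h2 | h2
    · exact no3_sorted h1 h2 hb ha hc
    · exact hac h2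
    · rcases Nat.lt_trichotomy b c with h3 | h3 | h3
      · exact no3_sorted h3 h2 hb hc ha
      · exact hbc h3
      · exact no3_sorted h3 h1 hc hb ha


/-- `i` is an active index: some point of line `i` is strictly on the `σ` side of
all the other lines. -/
def Active (n : ℕ) (σ : ℕ → ℝ) (i : ℕ) : Prop :=
  i < n ∧ ∃ pt : ℝ × ℝ, pt.1 + bb i * pt.2 = cc i ∧
    ∀ j, j < n → j ≠ i → 0 < σ j * (pt.1 + bb j * pt.2 - cc j)

lemma active_constraints {n : ℕ} {σ : ℕ → ℝ} {i : ℕ} (h : Active n σ i) :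
    ∃ y : ℝ, ∀ j, j < n → j ≠ i → 0 < σ j * ((cc i - cc j) + (bb j - bb i) * y) := by
  obtain ⟨-, pt, hpt, hcon⟩ := h
  refine ⟨pt.2, fun j hj hji => ?_⟩
  have key : pt.1 + bb j * pt.2 - cc j = (cc i - cc j) + (bb j - bb i) * pt.2 := by
    have hx : pt.1 = cc i - bb i * pt.2 := by linarith
    rw [hx]; ring
  have := hcon j hj hji
  rw [key] at this
  exact this

/-- A plus constraint above `i` forces `(-1)^i y` to be large positive. -/
lemma plus_above {n : ℕ} {σ : ℕ → ℝ} {i j : ℕ} {y : ℝ}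
    (hcon : ∀ j, j < n → j ≠ i → 0 < σ j * ((cc i - cc j) + (bb j - bb i) * y))
    (hij : i < j) (hjn : j < n) (hj1 : σ j = 1) :
    0 < (-1)^i * y ∧ (99/100) * cc j < ((-1)^i * y) * ((2:ℝ)⁻¹)^i := by
  have h := hcon j hjn (by omega)
  rw [hj1, one_mul] at h
  obtain ⟨r, hr, hr1, hr2⟩ := bbdiff hij
  have hrpos : 0 < r := lt_of_lt_of_le (by have := half_pow_pos i; linarith) hr1
  have hcc : (99/100) * cc j ≤ cc j - cc i := by
    have := cc_mul i j hij; have := cc_pos i; linarith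
  have hkey : (99/100) * cc j < r * ((-1)^i * y) := by
    have : (bb j - bb i) * y = r * ((-1)^i * y) := by rw [hr]; ring
    nlinarith [this, h]
  have hX : 0 < (-1:ℝ)^i * y := by nlinarith [cc_pos j]
  refine ⟨hX, ?_⟩
  calc (99/100) * cc j < r * ((-1)^i * y) := hkey
  _ ≤ ((2:ℝ)⁻¹)^i * ((-1)^i * y) := mul_le_mul_of_nonneg_right hr2 (le_of_lt hX)
  _ = ((-1)^i * y) * ((2:ℝ)⁻¹)^i := mul_comm _ _

/-- A minus constraint below `i` forces `(-1)^k y` to be large positive. -/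
lemma minus_below {n : ℕ} {σ : ℕ → ℝ} {i k : ℕ} {y : ℝ}
    (hcon : ∀ j, j < n → j ≠ i → 0 < σ j * ((cc i - cc j) + (bb j - bb i) * y))
    (hki : k < i) (hin : i < n) (hk1 : σ k = -1) :
    0 < (-1)^k * y ∧ (99/100) * cc i < ((-1)^k * y) * ((2:ℝ)⁻¹)^k := by
  have h := hcon k (by omega) (by omega)
  rw [hk1] at h
  have h' : (cc i - cc k) + (bb k - bb i) * y < 0 := by nlinarith
  obtain ⟨r, hr, hr1, hr2⟩ := bbdiff hki
  have hrpos : 0 < r := lt_of_lt_of_le (by have := half_pow_pos k; linarith) hr1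
  have hcc : (99/100) * cc i ≤ cc i - cc k := by
    have := cc_mul k i hki; have := cc_pos k; linarith
  have hbk : (bb k - bb i) * y = -(r * ((-1)^k * y)) := by
    linear_combination (-y) * hr
  have hkey : (99/100) * cc i < r * ((-1)^k * y) := by linarith
  have hX : 0 < (-1:ℝ)^k * y := by nlinarith [cc_pos i]
  refine ⟨hX, ?_⟩
  calc (99/100) * cc i < r * ((-1)^k * y) := hkey
  _ ≤ ((2:ℝ)⁻¹)^k * ((-1)^k * y) := mul_le_mul_of_nonneg_right hr2 (le_of_lt hX)
  _ = ((-1)^k * y) * ((2:ℝ)⁻¹)^k := mul_comm _ _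

/-- D1: if `i` is active then there is no pattern (minus at k, plus at j) with i<k<j. -/
lemma D1 {n : ℕ} {σ : ℕ → ℝ} {i k j : ℕ} (hi : Active n σ i)
    (hik : i < k) (hkj : k < j) (hjn : j < n) (hk : σ k = -1) (hj : σ j = 1) : False := by
  obtain ⟨y, hcon⟩ := active_constraints hi
  obtain ⟨hX, hQ⟩ := plus_above hcon (lt_trans hik hkj) hjn hj
  -- constraint at k: minus
  have h := hcon k (by omega) (by omega)
  rw [hk] at h
  have h' : (cc i - cc k) + (bb k - bb i) * y < 0 := by nlinarith
  obtain ⟨r, hr, hr1, hr2⟩ := bbdiff hik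
  have hrw : (bb k - bb i) * y = r * ((-1)^i * y) := by rw [hr]; ring
  have hup : r * ((-1)^i * y) < cc k := by
    have := cc_pos i; nlinarith [h']
  have hlow : ((2:ℝ)⁻¹)^i/3 * ((-1)^i * y) ≤ r * ((-1)^i * y) :=
    mul_le_mul_of_nonneg_right hr1 (le_of_lt hX)
  have hbig : (99/100) * cc j < ((-1)^i * y) * ((2:ℝ)⁻¹)^i := hQ
  have hccj : 100 * cc k ≤ cc j := cc_mul k j hkj
  have := cc_pos k
  nlinarith

/-- D2: if `i` is active then any two minus indices below `i` have equal parity. -/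
lemma D2 {n : ℕ} {σ : ℕ → ℝ} {i k j : ℕ} (hi : Active n σ i)
    (hji : j < i) (hki : k < i) (hj : σ j = -1) (hk : σ k = -1)
    (hpar : (-1:ℝ)^j = -(-1:ℝ)^k) : False := by
  have hin : i < n := hi.1
  obtain ⟨y, hcon⟩ := active_constraints hi
  obtain ⟨hXj, -⟩ := minus_below hcon hji hin hj
  obtain ⟨hXk, -⟩ := minus_below hcon hki hin hk
  rw [hpar] at hXj
  nlinarith

/-- D3: if `i` is active with a plus above, any minus below has the parity of `i`. -/
lemma D3 {n : ℕ} {σ : ℕ → ℝ} {i k j : ℕ} (hi : Active n σ i)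
    (hij : i < j) (hjn : j < n) (hj : σ j = 1) (hki : k < i) (hk : σ k = -1)
    (hpar : (-1:ℝ)^k = -(-1:ℝ)^i) : False := by
  obtain ⟨y, hcon⟩ := active_constraints hi
  obtain ⟨hXi, -⟩ := plus_above hcon hij hjn hj
  obtain ⟨hXk, -⟩ := minus_below hcon hki hi.1 hk
  rw [hpar] at hXk
  nlinarith

/-- D4: if `i` is active with a plus above, no plus below at distance ≥2 with equal parity. -/
lemma D4 {n : ℕ} {σ : ℕ → ℝ} {i k j : ℕ} (hi : Active n σ i)
    (hij : i < j) (hjn : j < n) (hj : σ j = 1) (hki : k + 2 ≤ i) (hk : σ k = 1)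
    (hpar : (-1:ℝ)^k = (-1:ℝ)^i) : False := by
  obtain ⟨y, hcon⟩ := active_constraints hi
  obtain ⟨hX, hQ⟩ := plus_above hcon hij hjn hj
  have h := hcon k (by omega) (by omega)
  rw [hk, one_mul] at h
  obtain ⟨r, hr, hr1, hr2⟩ := bbdiff (by omega : k < i)
  have hrw : (bb k - bb i) * y = -(r * ((-1)^i * y)) := by
    rw [show bb k - bb i = -((-1)^k * r) by linarith [hr], hpar]; ring
  have hup : r * ((-1)^i * y) < cc i := by
    have := cc_pos k; nlinarith [h]
  -- (2⁻¹)^k ≥ 4 * (2⁻¹)^i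
  have hpow : 4 * ((2:ℝ)⁻¹)^i ≤ ((2:ℝ)⁻¹)^k := by
    have h1 : ((2:ℝ)⁻¹)^i ≤ ((2:ℝ)⁻¹)^(k+2) :=
      pow_le_pow_of_le_one (by norm_num) (by norm_num) hki
    have h2 : ((2:ℝ)⁻¹)^(k+2) = ((2:ℝ)⁻¹)^k / 4 := by rw [pow_add]; ring
    rw [h2] at h1; linarith
  have hlow : (4 * ((2:ℝ)⁻¹)^i / 3) * ((-1)^i * y) ≤ r * ((-1)^i * y) := by
    apply mul_le_mul_of_nonneg_right _ (le_of_lt hX)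
    linarith
  have hcci : 100 * cc i ≤ cc j := cc_mul i j hij
  have := cc_pos i; have := cc_pos j
  nlinarith [hQ]

/-- D5: if `i` is active, no plus at m below a minus at k (m<k<i) with equal parity. -/
lemma D5 {n : ℕ} {σ : ℕ → ℝ} {i k m : ℕ} (hi : Active n σ i)
    (hmk : m + 2 ≤ k) (hki : k < i) (hm : σ m = 1) (hk : σ k = -1)
    (hpar : (-1:ℝ)^m = (-1:ℝ)^k) : False := by
  have hin : i < n := hi.1
  obtain ⟨y, hcon⟩ := active_constraints hi
  obtain ⟨hY, hQ⟩ := minus_below hcon hki hi.1 hk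
  have h := hcon m (by omega) (by omega)
  rw [hm, one_mul] at h
  obtain ⟨r, hr, hr1, hr2⟩ := bbdiff (by omega : m < i)
  have hrw : (bb m - bb i) * y = -(r * ((-1)^k * y)) := by
    rw [show bb m - bb i = -((-1)^m * r) by linarith [hr], hpar]; ring
  have hup : r * ((-1)^k * y) < cc i := by
    have := cc_pos m; nlinarith [h]
  have hpow : 4 * ((2:ℝ)⁻¹)^k ≤ ((2:ℝ)⁻¹)^m := by
    have h1 : ((2:ℝ)⁻¹)^k ≤ ((2:ℝ)⁻¹)^(m+2) :=
      pow_le_pow_of_le_one (by norm_num) (by norm_num) hmk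
    have h2 : ((2:ℝ)⁻¹)^(m+2) = ((2:ℝ)⁻¹)^m / 4 := by rw [pow_add]; ring
    rw [h2] at h1; linarith
  have hlow : (4 * ((2:ℝ)⁻¹)^k / 3) * ((-1)^k * y) ≤ r * ((-1)^k * y) := by
    apply mul_le_mul_of_nonneg_right _ (le_of_lt hY)
    linarith
  have := cc_pos i
  nlinarith [hQ]



lemma par_cases (a b : ℕ) : (-1:ℝ)^a = (-1)^b ∨ (-1:ℝ)^a = -(-1)^b := by
  rcases Nat.even_or_odd a with ha | ha <;> rcases Nat.even_or_odd b with hb | hb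
  · left; rw [ha.neg_one_pow, hb.neg_one_pow]
  · right; rw [ha.neg_one_pow, hb.neg_one_pow]; norm_num
  · right; rw [ha.neg_one_pow, hb.neg_one_pow]
  · left; rw [ha.neg_one_pow, hb.neg_one_pow]

lemma par_succ (a : ℕ) : (-1:ℝ)^(a+1) = -(-1)^a := by rw [pow_succ]; ring

lemma par_ne_zero (a : ℕ) : ((-1:ℝ)^a) ≠ 0 := by
  rcases Nat.even_or_odd a with h | h
  · rw [h.neg_one_pow]; norm_num
  · rw [h.neg_one_pow]; norm_num

lemma par_step2 {k i : ℕ} (h : k < i) (hp : (-1:ℝ)^k = (-1)^i) : k + 2 ≤ i := by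
  by_contra hc
  have : i = k + 1 := by omega
  subst this
  rw [par_succ] at hp
  have := par_ne_zero k
  have : (2:ℝ) * (-1)^k = 0 := by linarith
  have : ((-1:ℝ)^k) = 0 := by linarith
  exact par_ne_zero k this

lemma ex2 (s : Finset ℕ) (h : 2 ≤ s.card) : ∃ a ∈ s, ∃ b ∈ s, a < b := by
  have hne : s.Nonempty := Finset.card_pos.mp (by omega)
  exact ⟨s.min' hne, s.min'_mem hne, s.max' hne, s.max'_mem hne,
    s.min'_lt_max'_of_card (by omega)⟩

lemma ex3 (s : Finset ℕ) (h : 3 ≤ s.card) :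
    ∃ a ∈ s, ∃ b ∈ s, ∃ c ∈ s, a < b ∧ b < c := by
  have hne : s.Nonempty := Finset.card_pos.mp (by omega)
  set a := s.min' hne with ha
  have hcard : 2 ≤ (s.erase a).card := by
    rw [Finset.card_erase_of_mem (s.min'_mem hne)]; omega
  obtain ⟨b, hb, c, hc, hbc⟩ := ex2 _ hcard
  have hbs := Finset.mem_of_mem_erase hb
  have hcs := Finset.mem_of_mem_erase hc
  refine ⟨a, s.min'_mem hne, b, hbs, c, hcs, ?_, hbc⟩
  exact lt_of_le_of_ne (s.min'_le b hbs) (Ne.symm (Finset.ne_of_mem_erase hb))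

lemma ex4 (s : Finset ℕ) (h : 4 ≤ s.card) :
    ∃ a ∈ s, ∃ b ∈ s, ∃ c ∈ s, ∃ d ∈ s, a < b ∧ b < c ∧ c < d := by
  have hne : s.Nonempty := Finset.card_pos.mp (by omega)
  set a := s.min' hne with ha
  have hcard : 3 ≤ (s.erase a).card := by
    rw [Finset.card_erase_of_mem (s.min'_mem hne)]; omega
  obtain ⟨b, hb, c, hc, d, hd, hbc, hcd⟩ := ex3 _ hcard
  have hbs := Finset.mem_of_mem_erase hb
  refine ⟨a, s.min'_mem hne, b, hbs, c, Finset.mem_of_mem_erase hc,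
    d, Finset.mem_of_mem_erase hd, ?_, hbc, hcd⟩
  exact lt_of_le_of_ne (s.min'_le b hbs) (Ne.symm (Finset.ne_of_mem_erase hb))

section Counting
variable {n : ℕ} {σ : ℕ → ℝ}

lemma Active_lt {n : ℕ} {σ : ℕ → ℝ} {i : ℕ} (h : Active n σ i) : i < n := h.1

lemma no_three_lows (hσ : ∀ j, σ j = 1 ∨ σ j = -1) {a b c : ℕ} (ha : Active n σ a) (hb : Active n σ b)
    (hc : Active n σ c) (hab : a < b) (hbc : b < c)
    (hcp : ∃ j, j < n ∧ c < j ∧ σ j = 1) : False := by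
  obtain ⟨jc, hjcn, hcjc, hsjc⟩ := hcp
  have hbjc : b < jc := by omega
  have hajc : a < jc := by omega
  have hsb : σ b = 1 := by
    rcases hσ b with h | h
    · exact h
    · exact (D1 ha hab hbjc hjcn h hsjc).elim
  rcases hσ a with hsa | hsa
  · have h1 : (-1:ℝ)^a = -(-1)^b := by
      rcases par_cases a b with h | h
      · exact (D4 hb hbjc hjcn hsjc (par_step2 hab h) hsa h).elim
      · exact h
    have h2 : (-1:ℝ)^a = -(-1)^c := by
      rcases par_cases a c with h | h
      · exact (D4 hc hcjc hjcn hsjc (par_step2 (by omega) h) hsa h).elim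
      · exact h
    have hbc' : (-1:ℝ)^b = (-1)^c := by linarith
    exact D4 hc hcjc hjcn hsjc (par_step2 hbc hbc') hsb hbc'
  · have h1 : (-1:ℝ)^a = (-1)^b := by
      rcases par_cases a b with h | h
      · exact h
      · exact (D3 hb hbjc hjcn hsjc hab hsa (by linarith)).elim
    have h2 : (-1:ℝ)^a = (-1)^c := by
      rcases par_cases a c with h | h
      · exact h
      · exact (D3 hc hcjc hjcn hsjc (by omega) hsa (by linarith)).elim
    have hbc' : (-1:ℝ)^b = (-1)^c := by linarith
    exact D4 hc hcjc hjcn hsjc (par_step2 hbc hbc') hsb hbc'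

lemma no_four_highs (hσ : ∀ j, σ j = 1 ∨ σ j = -1) {a b c d : ℕ} (ha : Active n σ a) (hd : Active n σ d)
    (hab : a < b) (hbc : b < c) (hcd : c < d)
    (hah : ¬ ∃ j, j < n ∧ a < j ∧ σ j = 1) : False := by
  have hdn : d < n := Active_lt hd
  have hs1 : σ (a+1) = -1 := by
    rcases hσ (a+1) with h | h
    · exact (hah ⟨a+1, by omega, by omega, h⟩).elim
    · exact h
  have hs2 : σ (a+2) = -1 := by
    rcases hσ (a+2) with h | h
    · exact (hah ⟨a+2, by omega, by omega, h⟩).elim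
    · exact h
  exact D2 hd (by omega : a+1 < d) (by omega : a+2 < d) hs1 hs2 (by rw [par_succ (a+1)]; ring)

lemma no_mix (hσ : ∀ j, σ j = 1 ∨ σ j = -1) {a b g1 g2 g3 : ℕ} (ha : Active n σ a) (hg3 : Active n σ g3)
    (hab : a < b) (h12 : g1 < g2) (h23 : g2 < g3)
    (hbp : ∃ j, j < n ∧ b < j ∧ σ j = 1)
    (h2n : g2 < n)
    (hgh : ¬ ∃ j, j < n ∧ g1 < j ∧ σ j = 1) : False := by
  obtain ⟨js, hjsn, hbjs, hsjs⟩ := hbp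
  have hjsh1 : js ≤ g1 := by
    by_contra hc
    exact hgh ⟨js, hjsn, by omega, hsjs⟩
  have hsh2 : σ g2 = -1 := by
    rcases hσ g2 with h | h
    · exact (hgh ⟨g2, h2n, by omega, h⟩).elim
    · exact h
  have hjs1 : σ (js-1) = 1 := by
    rcases hσ (js-1) with h | h
    · exact h
    · exact (D1 ha (by omega : a < js - 1) (by omega : js - 1 < js) hjsn h hsjs).elim
  rcases par_cases js g2 with hp | hp
  · exact D5 hg3 (par_step2 (by omega) hp) h23 hsjs hsh2 hp
  · have hp' : (-1:ℝ)^(js-1) = (-1)^g2 := by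
      have hrw : (-1:ℝ)^js = -(-1)^(js-1) := by
        conv_lhs => rw [show js = (js - 1) + 1 from by omega]
        exact par_succ _
      rw [hrw] at hp
      linarith
    exact D5 hg3 (par_step2 (by omega : js - 1 < g2) hp') h23 hjs1 hsh2 hp'

open Classical in
theorem active_card (n : ℕ) (σ : ℕ → ℝ) (hσ : ∀ j, σ j = 1 ∨ σ j = -1) :
    ((Finset.range n).filter (fun i => Active n σ i)).card ≤ 4 := by
  classical
  set A := (Finset.range n).filter (fun i => Active n σ i) with hA
  have hmemA : ∀ i ∈ A, Active n σ i := fun i hi => (Finset.mem_filter.mp hi).2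
  set P : ℕ → Prop := fun i => ∃ j, j < n ∧ i < j ∧ σ j = 1 with hP
  set Alow := A.filter P with hAlow
  set Ahigh := A.filter (fun i => ¬ P i) with hAhigh
  have hsplit : Alow.card + Ahigh.card = A.card :=
    Finset.card_filter_add_card_filter_not (p := P)
  have hlow : Alow.card ≤ 2 := by
    by_contra hc
    obtain ⟨a, ha, b, hb, c, hcm, hab, hbc⟩ := ex3 Alow (by omega)
    have hc' := Finset.mem_filter.mp hcm
    exact no_three_lows hσ (hmemA a (Finset.mem_filter.mp ha).1)
      (hmemA b (Finset.mem_filter.mp hb).1) (hmemA c hc'.1) hab hbc hc'.2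
  have hhigh : Ahigh.card ≤ 3 := by
    by_contra hc
    obtain ⟨a, ha, b, hb, c, hcm, d, hd, hab, hbc, hcd⟩ := ex4 Ahigh (by omega)
    have ha' := Finset.mem_filter.mp ha
    have hd' := Finset.mem_filter.mp hd
    exact no_four_highs hσ (hmemA a ha'.1) (hmemA d hd'.1) hab hbc hcd ha'.2
  by_contra hcard
  have h5 : 5 ≤ A.card := by omega
  have hlow2 : Alow.card = 2 := by omega
  have hhigh3 : Ahigh.card = 3 := by omega
  obtain ⟨a, ha, b, hb, hab⟩ := ex2 Alow (by omega)
  obtain ⟨g1, hg1, g2, hg2, g3, hg3, h12, h23⟩ := ex3 Ahigh (by omega)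
  have hb' := Finset.mem_filter.mp hb
  have hg1' := Finset.mem_filter.mp hg1
  have hg2' := Finset.mem_filter.mp hg2
  have hg3' := Finset.mem_filter.mp hg3
  exact no_mix hσ (hmemA a (Finset.mem_filter.mp ha).1) (hmemA g3 hg3'.1)
    hab h12 h23 hb'.2 (Active_lt (hmemA g2 hg2'.1)) hg1'.2

end Counting

/-- The value of the affine functional of line `k`. -/
noncomputable def gv (k : ℕ) (p : ℝ × ℝ) : ℝ := p.1 + bb k * p.2 - cc k

lemma gv_cont (k : ℕ) : Continuous (gv k) := by
  unfold gv; fun_prop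

lemma mem_lineK_iff {k : ℕ} {p : ℝ×ℝ} : p ∈ lineK k ↔ gv k p = 0 := by
  simp only [lineK, Set.mem_setOf_eq, gv]; constructor <;> intro h <;> linarith

/-- The sign vector of a base point. -/
noncomputable def sgn (p₀ : ℝ × ℝ) (j : ℕ) : ℝ := if 0 < gv j p₀ then 1 else -1

lemma sgn_pm (p₀ : ℝ×ℝ) (j : ℕ) : sgn p₀ j = 1 ∨ sgn p₀ j = -1 := by
  unfold sgn; split <;> simp

lemma lineK_subset_union {n j : ℕ} (hj : j < n) : lineK j ⊆ linesUnion (arr n) := by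
  intro q hq
  exact Set.mem_biUnion (lineK_mem_arr hj) hq

/-- On the cell of `p₀`, every line functional keeps the sign it has at `p₀`. -/
lemma cell_sign {n : ℕ} {p₀ : ℝ×ℝ} (hp₀ : p₀ ∈ (linesUnion (arr n))ᶜ)
    {j : ℕ} (hj : j < n) :
    ∀ q ∈ connectedComponentIn (linesUnion (arr n))ᶜ p₀, 0 < sgn p₀ j * gv j q := by
  set c := connectedComponentIn (linesUnion (arr n))ᶜ p₀ with hc
  have hsub : c ⊆ (linesUnion (arr n))ᶜ := connectedComponentIn_subset _ _
  have hne : ∀ q ∈ c, gv j q ≠ 0 := by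
    intro q hq h0
    exact (hsub hq) (lineK_subset_union hj (mem_lineK_iff.mpr h0))
  have hp₀c : p₀ ∈ c := mem_connectedComponentIn hp₀
  have hpre : IsPreconnected c := isPreconnected_connectedComponentIn
  set U : Set (ℝ×ℝ) := {q | 0 < gv j q} with hU
  set V : Set (ℝ×ℝ) := {q | gv j q < 0} with hV
  have hUo : IsOpen U := isOpen_lt continuous_const (gv_cont j)
  have hVo : IsOpen V := isOpen_lt (gv_cont j) continuous_const
  have hdis : Disjoint U V := by
    rw [Set.disjoint_left]
    intro q hqU hqV
    simp only [hU, hV, Set.mem_setOf_eq] at hqU hqV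
    linarith
  have hcover : c ⊆ U ∪ V := by
    intro q hq
    rcases lt_or_gt_of_ne (hne q hq) with h | h
    · exact Or.inr h
    · exact Or.inl h
  intro q hq
  rcases lt_or_gt_of_ne (hne p₀ hp₀c) with h | h
  · -- gv j p₀ < 0 : c ⊆ V
    have hcV : c ⊆ V := by
      have hdis' : Disjoint V U := hdis.symm
      have : (c ∩ V).Nonempty := ⟨p₀, hp₀c, h⟩
      have hcover' : c ⊆ V ∪ U := by rw [Set.union_comm]; exact hcover
      exact hpre.subset_left_of_subset_union hVo hUo hdis' hcover' this
    have hs : sgn p₀ j = -1 := by unfold sgn; rw [if_neg (by linarith)]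
    have := hcV hq
    rw [hs]; simp only [hV, Set.mem_setOf_eq] at this; linarith
  · have hcU : c ⊆ U := by
      have : (c ∩ U).Nonempty := ⟨p₀, hp₀c, h⟩
      exact hpre.subset_left_of_subset_union hUo hVo hdis hcover this
    have hs : sgn p₀ j = 1 := by unfold sgn; rw [if_pos h]
    have := hcU hq
    rw [hs]; simp only [hU, Set.mem_setOf_eq] at this; linarith

/-- Closure of the cell satisfies the weak inequalities. -/
lemma cell_closure {n : ℕ} {p₀ : ℝ×ℝ} (hp₀ : p₀ ∈ (linesUnion (arr n))ᶜ) :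
    closure (connectedComponentIn (linesUnion (arr n))ᶜ p₀) ⊆
      {q | ∀ j, j < n → 0 ≤ sgn p₀ j * gv j q} := by
  apply closure_minimal
  · intro q hq j hj
    exact le_of_lt (cell_sign hp₀ hj q hq)
  · have : {q : ℝ×ℝ | ∀ j, j < n → 0 ≤ sgn p₀ j * gv j q}
        = ⋂ j ∈ Finset.range n, {q : ℝ×ℝ | 0 ≤ sgn p₀ j * gv j q} := by
      ext q
      simp [Finset.mem_range]
    rw [this]
    apply isClosed_biInter
    intro j _
    exact isClosed_le continuous_const (by have := gv_cont j; fun_prop)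

/-- A bounding line of a cell gives an active index. -/
lemma bounding_active {n : ℕ} {p₀ : ℝ×ℝ} (hp₀ : p₀ ∈ (linesUnion (arr n))ᶜ)
    {l : Set (ℝ×ℝ)}
    (hl : l ∈ boundingLines (arr n) (connectedComponentIn (linesUnion (arr n))ᶜ p₀)) :
    ∃ i, i < n ∧ l = lineK i ∧ Active n (sgn p₀) i := by
  obtain ⟨hlmem, p, q, hpq, hseg⟩ := hl
  obtain ⟨i, hin, hli⟩ := mem_arr hlmem
  refine ⟨i, hin, hli, hin, ?_⟩
  subst hli
  -- the parametrized segment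
  set f : ℝ → ℝ×ℝ := fun t => p + t • (q - p) with hf
  have hfseg : ∀ t ∈ Set.Icc (0:ℝ) 1, f t ∈ segment ℝ p q := by
    intro t ht
    rw [segment_eq_image' ℝ p q]
    exact ⟨t, ht, rfl⟩
  have hfinj : ∀ t₁ t₂ : ℝ, f t₁ = f t₂ → t₁ = t₂ := by
    intro t₁ t₂ he
    have hv : q - p ≠ 0 := sub_ne_zero.mpr (Ne.symm hpq)
    have : (t₁ - t₂) • (q - p) = 0 := by
      have : t₁ • (q - p) = t₂ • (q - p) := by
        have := he; simp only [hf] at this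
        exact add_left_cancel this
      rw [sub_smul, this, sub_self]
    rcases smul_eq_zero.mp this with h | h
    · linarith [sub_eq_zero.mp (by linarith [h] : t₁ - t₂ = 0)]
    · exact absurd h hv
  -- bad parameters
  set bad : Set ℝ := ⋃ j ∈ (Finset.range n).erase i,
      {t | t ∈ Set.Icc (0:ℝ) 1 ∧ gv j (f t) = 0} with hbad
  have hbadfin : bad.Finite := by
    apply Set.Finite.biUnion (Finset.finite_toSet _)
    intro j hj
    rw [Finset.coe_erase, Set.mem_diff] at hj
    have hji : j ≠ i := by
      intro he; exact hj.2 (by simp [he])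
    apply Set.Subsingleton.finite
    intro t₁ ht₁ t₂ ht₂
    have h₁ : f t₁ ∈ lineK i := (hseg (hfseg t₁ ht₁.1)).1
    have h₂ : f t₂ ∈ lineK i := (hseg (hfseg t₂ ht₂.1)).1
    have h₁' : f t₁ ∈ lineK j := mem_lineK_iff.mpr ht₁.2
    have h₂' : f t₂ ∈ lineK j := mem_lineK_iff.mpr ht₂.2
    exact hfinj _ _ (unique_cross hji h₁' h₁ h₂' h₂)
  have hIccInf : (Set.Icc (0:ℝ) 1).Infinite := Set.Icc_infinite (by norm_num)
  obtain ⟨t, ht⟩ := (hIccInf.diff hbadfin).nonempty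
  have htI : t ∈ Set.Icc (0:ℝ) 1 := ht.1
  set x := f t with hx
  have hxseg : x ∈ segment ℝ p q := hfseg t htI
  have hxl : x ∈ lineK i := (hseg hxseg).1
  have hxfr : x ∈ frontier (connectedComponentIn (linesUnion (arr n))ᶜ p₀) := (hseg hxseg).2
  have hxcl : ∀ j, j < n → 0 ≤ sgn p₀ j * gv j x :=
    cell_closure hp₀ (frontier_subset_closure hxfr)
  refine ⟨x, hxl, ?_⟩
  intro j hj hji
  have hne : gv j x ≠ 0 := by
    intro h0
    apply ht.2
    rw [hbad]
    refine Set.mem_biUnion ?_ ⟨htI, h0⟩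
    exact Finset.mem_erase.mpr ⟨hji, Finset.mem_range.mpr hj⟩
  have hge := hxcl j hj
  have : sgn p₀ j * gv j x ≠ 0 := by
    rcases sgn_pm p₀ j with h | h <;> rw [h] <;> simpa using hne
  have hgt : 0 < sgn p₀ j * gv j x := lt_of_le_of_ne hge (Ne.symm this)
  have : x.1 + bb j * x.2 - cc j = gv j x := rfl
  rw [this]
  exact hgt


theorem arr_simple (n : ℕ) : SimpleArrangement (arr n) := by
  refine ⟨?_, ?_, ?_⟩
  · intro l hl
    obtain ⟨k, -, rfl⟩ := mem_arr hl
    refine ⟨1, bb k, cc k, by simp, ?_⟩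
    ext p; simp [lineK]
  · intro l₁ h₁ l₂ h₂ hne
    obtain ⟨a, -, rfl⟩ := mem_arr h₁
    obtain ⟨b, -, rfl⟩ := mem_arr h₂
    exact cross_nonempty (fun h => hne (by rw [h]))
  · intro l₁ h₁ l₂ h₂ l₃ h₃ h12 h13 h23
    obtain ⟨a, -, rfl⟩ := mem_arr h₁
    obtain ⟨b, -, rfl⟩ := mem_arr h₂
    obtain ⟨c, -, rfl⟩ := mem_arr h₃
    rw [Set.eq_empty_iff_forall_notMem]
    rintro pt ⟨⟨ha, hb⟩, hc⟩
    exact no3 (fun h => h12 (by rw [h])) (fun h => h13 (by rw [h]))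
      (fun h => h23 (by rw [h])) ha hb hc

theorem cell_bound (n : ℕ) : ∀ c, IsCell (arr n) c →
    (boundingLines (arr n) c).ncard ≤ 4 := by
  classical
  rintro c ⟨p₀, hp₀, rfl⟩
  set T := (Finset.range n).filter (fun i => Active n (sgn p₀) i) with hT
  have hsub : boundingLines (arr n) (connectedComponentIn (linesUnion (arr n))ᶜ p₀)
      ⊆ lineK '' ↑T := by
    intro l hl
    obtain ⟨i, hin, hli, hact⟩ := bounding_active hp₀ hl
    exact ⟨i, by simp [hT, Finset.mem_filter, Finset.mem_range, hin, hact], hli.symm⟩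
  calc (boundingLines (arr n) (connectedComponentIn (linesUnion (arr n))ᶜ p₀)).ncard
      ≤ (lineK '' ↑T).ncard :=
        Set.ncard_le_ncard hsub ((T.finite_toSet).image _)
  _ ≤ (↑T : Set ℕ).ncard := Set.ncard_image_le T.finite_toSet
  _ = T.card := Set.ncard_coe_finset T
  _ ≤ 4 := by
    have := active_card n (sgn p₀) (sgn_pm p₀)
    convert this using 2
  
theorem cover_bound (n : ℕ) (C : Finset (Set (ℝ × ℝ)))
    (hC : ∀ c ∈ C, IsCell (arr n) c)
    (hcov : ∀ l ∈ arr n, ∃ c ∈ C, Bounds l c) : (n : ℝ) / 4 ≤ (C.card : ℝ) := by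
  classical
  have hchoice : ∀ l : Set (ℝ×ℝ), ∃ c : Set (ℝ×ℝ), l ∈ arr n → c ∈ C ∧ Bounds l c := by
    intro l
    by_cases h : l ∈ arr n
    · obtain ⟨c, hc, hb⟩ := hcov l h
      exact ⟨c, fun _ => ⟨hc, hb⟩⟩
    · exact ⟨∅, fun h' => absurd h' h⟩
  choose f hf using hchoice
  have key : (arr n).card ≤ 4 * ((arr n).image f).card := by
    apply Finset.card_le_mul_card_image
    intro c₀ hc₀
    obtain ⟨l₀, hl₀, hfl₀⟩ := Finset.mem_image.mp hc₀
    have hc₀C : c₀ ∈ C := by rw [← hfl₀]; exact (hf l₀ hl₀).1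
    have hcell : IsCell (arr n) c₀ := hC c₀ hc₀C
    have hsub : ↑((arr n).filter (fun l => f l = c₀)) ⊆ boundingLines (arr n) c₀ := by
      intro l hl
      rw [Finset.mem_coe, Finset.mem_filter] at hl
      refine ⟨hl.1, ?_⟩
      have := (hf l hl.1).2
      rw [hl.2] at this
      exact this
    have hfin : (boundingLines (arr n) c₀).Finite := by
      apply Set.Finite.subset (arr n).finite_toSet
      intro l hl; exact hl.1
    calc ((arr n).filter (fun l => f l = c₀)).card
        = (↑((arr n).filter (fun l => f l = c₀)) : Set (Set (ℝ×ℝ))).ncard :=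
          (Set.ncard_coe_finset _).symm
    _ ≤ (boundingLines (arr n) c₀).ncard := Set.ncard_le_ncard hsub hfin
    _ ≤ 4 := cell_bound n c₀ hcell
  have himg : (arr n).image f ⊆ C := by
    intro c₀ hc₀
    obtain ⟨l₀, hl₀, hfl₀⟩ := Finset.mem_image.mp hc₀
    rw [← hfl₀]; exact (hf l₀ hl₀).1
  have hnat : n ≤ 4 * C.card := by
    calc n = (arr n).card := (arr_card n).symm
    _ ≤ 4 * ((arr n).image f).card := key
    _ ≤ 4 * C.card := by
        have := Finset.card_le_card himg
        omega
  have hreal : (n:ℝ) ≤ 4 * (C.card : ℝ) := by exact_mod_cast hnat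
  linarith


end Stmt17

theorem stmt17 (n : ℕ) : ∃ L : Finset (Set (ℝ × ℝ)), SimpleArrangement L ∧ L.card = n ∧
    (∀ c, IsCell L c → (boundingLines L c).ncard ≤ 4) ∧
    ∀ C : Finset (Set (ℝ × ℝ)), (∀ c ∈ C, IsCell L c) →
      (∀ l ∈ L, ∃ c ∈ C, Bounds l c) → (n : ℝ) / 4 ≤ (C.card : ℝ) := by
  exact ⟨Stmt17.arr n, Stmt17.arr_simple n, Stmt17.arr_card n, Stmt17.cell_bound n,
    Stmt17.cover_bound n⟩
end
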